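/- arXiv:1806.11208 — 3 statements merged into one kernel-verified Lean document; each statement's English description precedes it below -/
import Mathlib

section
/- The number of symmetric noncrossing perfect matchings on the set {±1, ±2, ..., ±n} equals the central binomial coefficient C(n, ⌊n/2⌋). -/
/-- The set `{±1, ..., ±n} ⊆ ℤ`. -/
noncomputable def pmSet (n : ℕ) : Finset ℤ := (Finset.Icc (-(n : ℤ)) n).erase 0

/-- `M` is a noncrossing symmetric perfect matching on `{±1, ..., ±n}`:
a set of pairwise disjoint 2-element blocks with union `{±1, ..., ±n}`,
closed under negation, with no two blocks `{i,j}`, `{a,b}` satisfying `i < a < j < b`. -/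
def IsNCSP (n : ℕ) (M : Finset (Finset ℤ)) : Prop :=
  (∀ B ∈ M, B.card = 2) ∧
  ((M : Set (Finset ℤ)).Pairwise fun B B' => Disjoint B B') ∧
  M.biUnion id = pmSet n ∧
  (∀ B ∈ M, B.image (fun x => -x) ∈ M) ∧
  (∀ B ∈ M, ∀ B' ∈ M, ∀ i ∈ B, ∀ j ∈ B, ∀ a ∈ B', ∀ b ∈ B',
    ¬ (i < a ∧ a < j ∧ j < b))

/-! ### Ballot words -/

/-- number of positions `j ∈ [1,k]` with `w j = b`. -/
def wcnt (w : ℕ → Bool) (b : Bool) (k : ℕ) : ℕ :=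
  ((Finset.Icc 1 k).filter (fun j => w j = b)).card

def BallotW (n : ℕ) (w : ℕ → Bool) : Prop :=
  ∀ k ≤ n, wcnt w false k ≤ wcnt w true k

instance (n : ℕ) (w : ℕ → Bool) : Decidable (BallotW n w) := by
  unfold BallotW; infer_instance

lemma wcnt_zero (w : ℕ → Bool) (b : Bool) : wcnt w b 0 = 0 := by
  simp [wcnt]

lemma wcnt_succ (w : ℕ → Bool) (b : Bool) (k : ℕ) :
    wcnt w b (k+1) = wcnt w b k + if w (k+1) = b then 1 else 0 := by
  unfold wcnt
  have h : Finset.Icc 1 (k+1) = insert (k+1) (Finset.Icc 1 k) := by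
    ext j; simp [Finset.mem_Icc, Finset.mem_insert]; omega
  rw [h, Finset.filter_insert]
  split
  · rw [Finset.card_insert_of_notMem (by simp)]
  · simp

lemma wcnt_add (w : ℕ → Bool) (k : ℕ) : wcnt w true k + wcnt w false k = k := by
  induction k with
  | zero => simp [wcnt_zero]
  | succ k ih =>
    rw [wcnt_succ, wcnt_succ]
    cases h : w (k+1) <;> simp [h] <;> omega

lemma wcnt_congr {w w' : ℕ → Bool} (b : Bool) (k : ℕ)
    (h : ∀ j, 1 ≤ j → j ≤ k → w j = w' j) : wcnt w b k = wcnt w' b k := by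
  unfold wcnt
  congr 1
  apply Finset.filter_congr
  intro j hj
  simp only [Finset.mem_Icc] at hj
  rw [h j hj.1 hj.2]

lemma wcnt_le (w : ℕ → Bool) (b : Bool) (k : ℕ) : wcnt w b k ≤ k := by
  have := wcnt_add w k
  cases b <;> omega

/-! ### words of length n as functions on `Fin n` -/

def extW (n : ℕ) (f : Fin n → Bool) : ℕ → Bool :=
  fun k => if h : 1 ≤ k ∧ k ≤ n then f ⟨k-1, by omega⟩ else true

/-- count of ballot words of length `n` with `t` letters `true`. -/
def A (n t : ℕ) : ℕ :=
  ((Finset.univ : Finset (Fin n → Bool)).filter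
    (fun f => BallotW n (extW n f) ∧ wcnt (extW n f) true n = t)).card

def B (n : ℕ) : ℕ :=
  ((Finset.univ : Finset (Fin n → Bool)).filter (fun f => BallotW n (extW n f))).card

lemma extW_snoc_le (n : ℕ) (g : Fin n → Bool) (b : Bool) (k : ℕ) (hk : k ≤ n) :
    extW (n+1) (Fin.snoc g b) k = extW n g k := by
  unfold extW
  by_cases h : 1 ≤ k ∧ k ≤ n
  · rw [dif_pos ⟨h.1, by omega⟩, dif_pos h]
    have : (⟨k-1, by omega⟩ : Fin (n+1)) = Fin.castSucc ⟨k-1, by omega⟩ := by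
      simp [Fin.castSucc]
    rw [this, Fin.snoc_castSucc]
  · rw [dif_neg (by omega), dif_neg h]

lemma extW_snoc_last (n : ℕ) (g : Fin n → Bool) (b : Bool) :
    extW (n+1) (Fin.snoc g b) (n+1) = b := by
  unfold extW
  rw [dif_pos ⟨by omega, le_refl _⟩]
  have : (⟨n+1-1, by omega⟩ : Fin (n+1)) = Fin.last n := by
    simp [Fin.last]
  rw [this, Fin.snoc_last]

lemma wcnt_extW_snoc (n : ℕ) (g : Fin n → Bool) (b c : Bool) (k : ℕ) (hk : k ≤ n) :
    wcnt (extW (n+1) (Fin.snoc g b)) c k = wcnt (extW n g) c k :=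
  wcnt_congr c k (fun j _ hj => extW_snoc_le n g b j (le_trans hj hk))

lemma ballot_snoc (n : ℕ) (g : Fin n → Bool) (b : Bool) :
    BallotW (n+1) (extW (n+1) (Fin.snoc g b)) ↔
      BallotW n (extW n g) ∧
        wcnt (extW n g) false n + (if b = false then 1 else 0) ≤
          wcnt (extW n g) true n + (if b = true then 1 else 0) := by
  constructor
  · intro h
    refine ⟨fun k hk => ?_, ?_⟩
    · have := h k (by omega)
      rwa [wcnt_extW_snoc n g b false k hk, wcnt_extW_snoc n g b true k hk] at this
    · have := h (n+1) (le_refl _)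
      rwa [wcnt_succ, wcnt_succ, extW_snoc_last,
        wcnt_extW_snoc n g b false n (le_refl _),
        wcnt_extW_snoc n g b true n (le_refl _)] at this
  · rintro ⟨h1, h2⟩ k hk
    rcases Nat.lt_or_ge k (n+1) with h | h
    · rw [wcnt_extW_snoc n g b false k (by omega), wcnt_extW_snoc n g b true k (by omega)]
      exact h1 k (by omega)
    · have hk' : k = n + 1 := by omega
      subst hk'
      rw [wcnt_succ, wcnt_succ, extW_snoc_last,
        wcnt_extW_snoc n g b false n (le_refl _),
        wcnt_extW_snoc n g b true n (le_refl _)]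
      exact h2

lemma A_zero_left (t : ℕ) : A 0 t = if t = 0 then 1 else 0 := by
  unfold A
  rcases Nat.eq_zero_or_pos t with h | h
  · subst h
    rw [if_pos rfl]
    rw [show ((Finset.univ : Finset (Fin 0 → Bool)).filter _) = Finset.univ from ?_]
    · simp [Finset.card_univ]
    · apply Finset.filter_true_of_mem
      intro f _
      constructor
      · intro k hk
        interval_cases k
        simp [wcnt_zero]
      · simp [wcnt_zero]
  · rw [if_neg (by omega)]
    apply Finset.card_eq_zero.mpr
    apply Finset.filter_false_of_mem
    intro f _
    simp [wcnt_zero]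
    omega

lemma A_recurrence (n t : ℕ) :
    A (n+1) t = (if 1 ≤ t then A n (t-1) else 0) + (if n < 2*t then A n t else 0) := by
  classical
  have hsum : A (n+1) t = ∑ b : Bool, ∑ g : Fin n → Bool,
      (if (BallotW n (extW n g) ∧
            wcnt (extW n g) false n + (cond b 0 1) ≤ wcnt (extW n g) true n + (cond b 1 0) ∧
            wcnt (extW n g) true n + (cond b 1 0) = t) then 1 else 0) := by
    rw [A, Finset.card_filter]
    rw [← Equiv.sum_comp (Fin.snocEquiv (fun _ => Bool))]
    rw [Fintype.sum_prod_type]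
    apply Finset.sum_congr rfl
    intro b _
    apply Finset.sum_congr rfl
    intro g _
    have hsnoc : (Fin.snocEquiv (fun _ => Bool)) (b, g) = Fin.snoc g b := rfl
    rw [hsnoc]
    congr 1
    rw [eq_iff_iff, ballot_snoc]
    rw [wcnt_succ, extW_snoc_last, wcnt_extW_snoc n g b true n (le_refl _)]
    cases b <;> simp <;> tauto
  rw [hsum, Fintype.sum_bool]
  simp only [Bool.cond_true, Bool.cond_false]
  have htrue : (∑ g : Fin n → Bool, if (BallotW n (extW n g) ∧
        wcnt (extW n g) false n + 0 ≤ wcnt (extW n g) true n + 1 ∧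
        wcnt (extW n g) true n + 1 = t) then 1 else 0)
      = (if 1 ≤ t then A n (t-1) else 0) := by
    rcases Nat.lt_or_ge t 1 with h | h
    · rw [if_neg (by omega)]
      apply Finset.sum_eq_zero
      intro g _
      rw [if_neg]
      rintro ⟨_, _, h3⟩
      omega
    · rw [if_pos h, A, Finset.card_filter]
      apply Finset.sum_congr rfl
      intro g _
      congr 1
      rw [eq_iff_iff]
      constructor
      · rintro ⟨h1, _, h3⟩; exact ⟨h1, by omega⟩
      · rintro ⟨h1, h2⟩
        refine ⟨h1, ?_, by omega⟩
        have := h1 n (le_refl _)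
        omega
  have hfalse : (∑ g : Fin n → Bool, if (BallotW n (extW n g) ∧
        wcnt (extW n g) false n + 1 ≤ wcnt (extW n g) true n + 0 ∧
        wcnt (extW n g) true n + 0 = t) then 1 else 0)
      = (if n < 2*t then A n t else 0) := by
    rcases Nat.lt_or_ge n (2*t) with h | h
    · rw [if_pos h, A, Finset.card_filter]
      apply Finset.sum_congr rfl
      intro g _
      congr 1
      rw [eq_iff_iff]
      have hadd := wcnt_add (extW n g) n
      constructor
      · rintro ⟨h1, _, h3⟩; exact ⟨h1, by omega⟩
      · rintro ⟨h1, h2⟩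
        exact ⟨h1, by omega, by omega⟩
    · rw [if_neg (by omega)]
      apply Finset.sum_eq_zero
      intro g _
      rw [if_neg]
      have hadd := wcnt_add (extW n g) n
      rintro ⟨_, h2, h3⟩
      omega
  rw [htrue, hfalse]

lemma A_eq_zero {n t : ℕ} (h : 2*t < n) : A n t = 0 := by
  apply Finset.card_eq_zero.mpr
  apply Finset.filter_false_of_mem
  intro f _
  rintro ⟨h1, h2⟩
  have := h1 n (le_refl _)
  have hadd := wcnt_add (extW n f) n
  omega

lemma A_choose (n : ℕ) : ∀ t, n ≤ 2*t → A n t + n.choose (t+1) = n.choose t := by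
  induction n with
  | zero =>
    intro t _
    rcases Nat.eq_zero_or_pos t with h | h
    · subst h; rw [A_zero_left]; simp
    · rw [A_zero_left, if_neg (by omega), Nat.choose_eq_zero_of_lt (by omega),
        Nat.choose_eq_zero_of_lt (by omega)]
  | succ n ih =>
    intro t ht
    have ht1 : 1 ≤ t := by omega
    rw [A_recurrence, if_pos ht1]
    rcases Nat.lt_or_ge n (2*t) with h | h
    · rw [if_pos h]
      -- A n (t-1) + A n t + choose (n+1) (t+1) = choose (n+1) t
      have hps := Nat.choose_succ_succ n (t-1)
      have hps2 := Nat.choose_succ_succ n t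
      simp only [Nat.succ_eq_add_one] at hps hps2
      rw [show t - 1 + 1 = t from by omega] at hps
      have h2 : A n t + n.choose (t+1) = n.choose t := ih t (by omega)
      rcases le_or_gt n (2*(t-1)) with h3 | h3
      · have h4 : A n (t-1) + n.choose (t-1+1) = n.choose (t-1) := ih (t-1) h3
        rw [show t - 1 + 1 = t from by omega] at h4
        omega
      · -- n = 2t-1
        have hn : n = 2*t-1 := by omega
        have h5 : A n (t-1) = 0 := A_eq_zero (by omega)
        have h6 : n.choose (t-1) = n.choose t := by
          calc n.choose (t-1) = n.choose (n - t) := by rw [show n - t = t - 1 from by omega]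
            _ = n.choose t := Nat.choose_symm (by omega)
        omega
    · -- n ≥ 2t and n+1 ≤ 2t: contradiction
      omega

lemma A_sum_telescope (n : ℕ) : ∀ d j, j + d = n + 1 → n ≤ 2*j →
    (∑ t ∈ Finset.Ico j (n+1), A n t) = n.choose j := by
  intro d
  induction d with
  | zero =>
    intro j hj _
    have : j = n + 1 := by omega
    subst this
    simp [Nat.choose_eq_zero_of_lt]
  | succ d ihd =>
    intro j hj h2j
    have hjn : j ≤ n := by omega
    have hins : Finset.Ico j (n+1) = insert j (Finset.Ico (j+1) (n+1)) := by
      ext x; simp [Finset.mem_Ico, Finset.mem_insert]; omega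
    rw [hins, Finset.sum_insert (by simp), ihd (j+1) (by omega) (by omega)]
    have := A_choose n j (by omega)
    omega

lemma B_eq_sum (n : ℕ) : B n = ∑ t ∈ Finset.range (n+1), A n t := by
  classical
  unfold B A
  rw [Finset.card_filter]
  have : ∀ t ∈ Finset.range (n+1),
      (Finset.filter (fun f => BallotW n (extW n f) ∧ wcnt (extW n f) true n = t)
        (Finset.univ : Finset (Fin n → Bool))).card
      = ∑ f : Fin n → Bool, if (BallotW n (extW n f) ∧ wcnt (extW n f) true n = t) then 1 else 0 :=
    fun t _ => Finset.card_filter _ _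
  rw [Finset.sum_congr rfl this, Finset.sum_comm]
  apply Finset.sum_congr rfl
  intro f _
  by_cases hb : BallotW n (extW n f)
  · rw [if_pos hb]
    rw [Finset.sum_eq_single (wcnt (extW n f) true n)]
    · rw [if_pos ⟨hb, rfl⟩]
    · intro t _ ht
      rw [if_neg (by tauto)]
    · intro hmem
      exfalso
      apply hmem
      simp only [Finset.mem_range]
      have := wcnt_le (extW n f) true n
      omega
  · rw [if_neg hb]
    symm
    apply Finset.sum_eq_zero
    intro t _
    rw [if_neg (by tauto)]

theorem B_eq_choose (n : ℕ) : B n = n.choose (n/2) := by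
  rw [B_eq_sum]
  have hsplit : Finset.range (n+1) = Finset.Ico 0 (n - n/2) ∪ Finset.Ico (n - n/2) (n+1) := by
    rw [Finset.Ico_union_Ico_eq_Ico (by omega) (by omega), Finset.range_eq_Ico]
  rw [hsplit, Finset.sum_union]
  · rw [Finset.sum_eq_zero, A_sum_telescope n (n + 1 - (n - n/2)) (n - n/2) (by omega) (by omega)]
    · rw [Nat.choose_symm (by omega)]
      simp
    · intro t ht
      simp only [Finset.mem_Ico] at ht
      exact A_eq_zero (by omega)
  · apply Finset.Ico_disjoint_Ico_consecutive

def NCSPgen (S : Finset ℤ) (M : Finset (Finset ℤ)) : Prop :=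
  (∀ B ∈ M, B.card = 2) ∧
  ((M : Set (Finset ℤ)).Pairwise fun B B' => Disjoint B B') ∧
  M.biUnion id = S ∧
  (∀ B ∈ M, B.image (fun x => -x) ∈ M) ∧
  (∀ B ∈ M, ∀ B' ∈ M, ∀ i ∈ B, ∀ j ∈ B, ∀ a ∈ B', ∀ b ∈ B',
    ¬ (i < a ∧ a < j ∧ j < b))

namespace NCSP

variable {S : Finset ℤ} {M : Finset (Finset ℤ)}

lemma block_subset (hM : NCSPgen S M) {B : Finset ℤ} (hB : B ∈ M) : B ⊆ S := by
  intro x hx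
  rw [← hM.2.2.1]
  exact Finset.mem_biUnion.mpr ⟨B, hB, hx⟩

lemma exists_block (hM : NCSPgen S M) {x : ℤ} (hx : x ∈ S) : ∃ B ∈ M, x ∈ B := by
  rw [← hM.2.2.1] at hx
  exact Finset.mem_biUnion.mp hx

lemma block_eq (hM : NCSPgen S M) {B B' : Finset ℤ} (hB : B ∈ M) (hB' : B' ∈ M)
    {x : ℤ} (hx : x ∈ B) (hx' : x ∈ B') : B = B' := by
  by_contra hne
  have hd : Disjoint B B' := hM.2.1 hB hB' hne
  rw [Finset.disjoint_left] at hd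
  exact hd hx hx' 

lemma partner_exists (hM : NCSPgen S M) {x : ℤ} (hx : x ∈ S) :
    ∃ y, y ≠ x ∧ ({x, y} : Finset ℤ) ∈ M := by
  obtain ⟨B, hB, hxB⟩ := exists_block hM hx
  obtain ⟨a, b, hab, rfl⟩ := Finset.card_eq_two.mp (hM.1 B hB)
  rcases Finset.mem_insert.mp hxB with rfl | hxb
  · exact ⟨b, fun h => hab h.symm, hB⟩
  · rw [Finset.mem_singleton] at hxb
    subst hxb
    exact ⟨a, hab, by rwa [Finset.pair_comm]⟩

lemma ne_of_pair (hM : NCSPgen S M) {x y : ℤ} (h : ({x, y} : Finset ℤ) ∈ M) : y ≠ x := by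
  intro h'
  have h2 := hM.1 _ h
  rw [h'] at h2
  simp at h2

lemma partner_unique (hM : NCSPgen S M) {x y z : ℤ} (hy : ({x, y} : Finset ℤ) ∈ M)
    (hz : ({x, z} : Finset ℤ) ∈ M) : y = z := by
  have h := block_eq hM hy hz (Finset.mem_insert_self x {y}) (Finset.mem_insert_self x {z})
  have hzy : z ∈ ({x, y} : Finset ℤ) := h ▸ Finset.mem_insert.mpr (Or.inr (Finset.mem_singleton_self z))
  rcases Finset.mem_insert.mp hzy with rfl | hzy
  · exact (ne_of_pair hM hz rfl).elim
  · exact (Finset.mem_singleton.mp hzy).symm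

lemma neg_pair (hM : NCSPgen S M) {x y : ℤ} (h : ({x, y} : Finset ℤ) ∈ M) :
    ({-x, -y} : Finset ℤ) ∈ M := by
  have := hM.2.2.2.1 _ h
  rwa [Finset.image_insert, Finset.image_singleton] at this

lemma noncross (hM : NCSPgen S M) {i j a b : ℤ} (h1 : ({i, j} : Finset ℤ) ∈ M)
    (h2 : ({a, b} : Finset ℤ) ∈ M) (hia : i < a) (haj : a < j) (hjb : j < b) : False := by
  refine hM.2.2.2.2 _ h1 _ h2 i (by simp) j (by simp) a (by simp) b (by simp) ⟨hia, haj, hjb⟩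

/-- a block crossing zero must be `{x, -x}`. -/
lemma diag_of_mixed (hM : NCSPgen S M) {x y : ℤ} (h : ({x, y} : Finset ℤ) ∈ M)
    (hx : x < 0) (hy : 0 < y) : y = -x := by
  by_contra hne
  have hmir := neg_pair hM h
  rcases lt_or_gt_of_ne hne with hlt | hgt
  · -- y < -x : crossing  x < -y < y < -x
    exact noncross hM h (by rwa [Finset.pair_comm] at hmir : ({-y, -x} : Finset ℤ) ∈ M)
      (by omega) (by omega) (by omega)
  · -- -x < y : crossing -y < x < -x < y
    rw [Finset.pair_comm] at hmir
    exact noncross hM hmir h (by omega) (by omega) (by omega)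

end NCSP


noncomputable def wordOf (M : Finset (Finset ℤ)) (k : ℕ) : Bool :=
  ! decide (∃ j ∈ Finset.Ioo (0:ℤ) (k:ℤ), ({j, (k:ℤ)} : Finset ℤ) ∈ M)

lemma wordOf_eq_false_iff {M : Finset (Finset ℤ)} {k : ℕ} :
    wordOf M k = false ↔ ∃ j : ℤ, 0 < j ∧ j < (k:ℤ) ∧ ({j, (k:ℤ)} : Finset ℤ) ∈ M := by
  simp only [wordOf, Bool.not_eq_false', decide_eq_true_eq, Finset.mem_Ioo]
  tauto

lemma wordOf_eq_true_iff {M : Finset (Finset ℤ)} {k : ℕ} :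
    wordOf M k = true ↔ ∀ j : ℤ, 0 < j → j < (k:ℤ) → ({j, (k:ℤ)} : Finset ℤ) ∉ M := by
  simp only [wordOf, Bool.not_eq_true', decide_eq_false_iff_not, Finset.mem_Ioo]
  push_neg
  constructor
  · intro h j h1 h2; exact h j ⟨h1, h2⟩
  · intro h j hj; exact h j hj.1 hj.2

namespace NCSP

variable {n : ℕ} {M : Finset (Finset ℤ)}

lemma mem_pmSet {n : ℕ} {x : ℤ} : x ∈ pmSet n ↔ x ≠ 0 ∧ -(n:ℤ) ≤ x ∧ x ≤ n := by
  simp [pmSet, Finset.mem_erase, Finset.mem_Icc]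

lemma wordOf_true_of_gt (hM : NCSPgen (pmSet n) M) {k : ℕ} (hk : n < k) :
    wordOf M k = true := by
  rw [wordOf_eq_true_iff]
  intro j _ _ hmem
  have := block_subset hM hmem (Finset.mem_insert.mpr (Or.inr (Finset.mem_singleton_self _)))
  rw [mem_pmSet] at this
  omega

/-- the partner of a "closer" is an "opener". -/
lemma partner_is_opener (hM : NCSPgen S M) {j k : ℤ} (h : ({j, k} : Finset ℤ) ∈ M)
    (h0 : 0 < j) (hjk : j < k) :
    ∀ j' : ℤ, 0 < j' → j' < j → ({j', j} : Finset ℤ) ∉ M := by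
  intro j' _ hj' hmem
  have := partner_unique hM h (by rwa [Finset.pair_comm] at hmem)
  omega

end NCSP

namespace NCSP

variable {n : ℕ} {S : Finset ℤ} {M : Finset (Finset ℤ)}

lemma ballot_wordOf (hM : NCSPgen (pmSet n) M) : BallotW n (wordOf M) := by
  intro k _
  have key : ∀ m : ℕ, ∃ j : ℤ, (wordOf M m = false →
      0 < j ∧ j < (m:ℤ) ∧ ({j, (m:ℤ)} : Finset ℤ) ∈ M) := by
    intro m
    by_cases h : wordOf M m = false
    · obtain ⟨j, hj⟩ := wordOf_eq_false_iff.mp h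
      exact ⟨j, fun _ => hj⟩
    · exact ⟨0, fun hc => absurd hc h⟩
  choose p hp using key
  unfold wcnt
  apply Finset.card_le_card_of_injOn (fun m => (p m).toNat)
  · intro m hm
    simp only [Finset.mem_coe, Finset.mem_filter, Finset.mem_Icc] at hm ⊢
    obtain ⟨⟨hm1, hm2⟩, hmf⟩ := hm
    obtain ⟨h1, h2, h3⟩ := hp m hmf
    have hcast : (((p m).toNat : ℤ)) = p m := Int.toNat_of_nonneg (by omega)
    refine ⟨⟨by omega, by omega⟩, ?_⟩
    rw [wordOf_eq_true_iff]
    intro j' hj1 hj2 hmem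
    rw [hcast] at hj2 hmem
    exact partner_is_opener hM h3 h1 h2 j' hj1 hj2 hmem
  · intro m1 hm1 m2 hm2 heq
    simp only [Finset.coe_filter, Set.mem_setOf_eq, Finset.mem_Icc] at hm1 hm2
    obtain ⟨h11, h12, h13⟩ := hp m1 hm1.2
    obtain ⟨h21, h22, h23⟩ := hp m2 hm2.2
    have hc1 : ((p m1).toNat : ℤ) = p m1 := Int.toNat_of_nonneg (by omega)
    have hc2 : ((p m2).toNat : ℤ) = p m2 := Int.toNat_of_nonneg (by omega)
    simp only at heq
    have hpeq : p m1 = p m2 := by rw [← hc1, ← hc2, heq]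
    rw [hpeq] at h13
    have := partner_unique hM h13 h23
    omega

noncomputable def diagM (n : ℕ) : Finset (Finset ℤ) := (Finset.Icc (1:ℤ) n).image fun t => {t, -t}

lemma mem_diagM {B : Finset ℤ} : B ∈ diagM n ↔ ∃ t : ℤ, 1 ≤ t ∧ t ≤ n ∧ B = {t, -t} := by
  simp only [diagM, Finset.mem_image, Finset.mem_Icc]
  constructor
  · rintro ⟨t, ⟨h1, h2⟩, rfl⟩; exact ⟨t, h1, h2, rfl⟩
  · rintro ⟨t, h1, h2, rfl⟩; exact ⟨t, ⟨h1, h2⟩, rfl⟩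

lemma diag_NCSP : NCSPgen (pmSet n) (diagM n) := by
  refine ⟨?_, ?_, ?_, ?_, ?_⟩
  · intro B hB
    obtain ⟨t, h1, _, rfl⟩ := mem_diagM.mp hB
    rw [Finset.card_insert_of_notMem (by rw [Finset.mem_singleton]; omega), Finset.card_singleton]
  · intro B hB B' hB' hne
    obtain ⟨t, ht1, _, rfl⟩ := mem_diagM.mp hB
    obtain ⟨s, hs1, _, rfl⟩ := mem_diagM.mp hB'
    rw [Finset.disjoint_left]
    intro x hx hx'
    simp only [Finset.mem_insert, Finset.mem_singleton] at hx hx'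
    have : t = s := by omega
    subst this
    exact hne rfl
  · ext x
    simp only [Finset.mem_biUnion, mem_pmSet, id]
    constructor
    · rintro ⟨B, hB, hx⟩
      obtain ⟨t, h1, h2, rfl⟩ := mem_diagM.mp hB
      simp only [Finset.mem_insert, Finset.mem_singleton] at hx
      omega
    · intro hx
      rcases le_or_gt x 0 with h | h
      · exact ⟨{-x, x}, mem_diagM.mpr ⟨-x, by omega, by omega, by rw [neg_neg]⟩, by simp⟩
      · exact ⟨{x, -x}, mem_diagM.mpr ⟨x, by omega, by omega, rfl⟩, by simp⟩
  · intro B hB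
    obtain ⟨t, h1, h2, rfl⟩ := mem_diagM.mp hB
    rw [Finset.image_insert, Finset.image_singleton]
    exact mem_diagM.mpr ⟨t, h1, h2, by rw [neg_neg, Finset.pair_comm]⟩
  · intro B hB B' hB' i hi j hj a ha b hb
    obtain ⟨t, ht1, _, rfl⟩ := mem_diagM.mp hB
    obtain ⟨s, hs1, _, rfl⟩ := mem_diagM.mp hB'
    simp only [Finset.mem_insert, Finset.mem_singleton] at hi hj ha hb
    rintro ⟨h1, h2, h3⟩
    rcases hi with rfl | rfl <;> rcases hj with rfl | rfl <;>
      rcases ha with rfl | rfl <;> rcases hb with rfl | rfl <;> omega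

lemma wordOf_diag (k : ℕ) : wordOf (diagM n) k = true := by
  rw [wordOf_eq_true_iff]
  intro j hj1 hj2 hmem
  obtain ⟨t, ht1, _, heq⟩ := mem_diagM.mp hmem
  have hjm : j ∈ ({t, -t} : Finset ℤ) := heq ▸ Finset.mem_insert_self _ _
  have hkm : (k:ℤ) ∈ ({t, -t} : Finset ℤ) := heq ▸ Finset.mem_insert.mpr
    (Or.inr (Finset.mem_singleton_self _))
  simp only [Finset.mem_insert, Finset.mem_singleton] at hjm hkm
  omega

lemma eq_diag_of_all_true (hM : NCSPgen (pmSet n) M)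
    (hw : ∀ k : ℕ, 1 ≤ k → k ≤ n → wordOf M k = true) : M = diagM n := by
  have hpos : ∀ x y : ℤ, ({x, y} : Finset ℤ) ∈ M → 0 < x → x < y → False := by
    intro x y hxy hx hlt
    have hyS := block_subset hM hxy (Finset.mem_insert.mpr (Or.inr (Finset.mem_singleton_self _)))
    rw [mem_pmSet] at hyS
    have hcast : ((y.toNat : ℤ)) = y := Int.toNat_of_nonneg (by omega)
    have := wordOf_eq_true_iff.mp (hw y.toNat (by omega) (by omega)) x hx
      (by rw [hcast]; omega) (by rw [hcast]; exact hxy)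
    exact this
  have haux : ∀ a b : ℤ, ({a, b} : Finset ℤ) ∈ M → a < b →
      ∃ t : ℤ, 1 ≤ t ∧ t ≤ n ∧ ({a, b} : Finset ℤ) = {t, -t} := by
    intro a b hab hlt
    have haS := block_subset hM hab (Finset.mem_insert_self _ _)
    have hbS := block_subset hM hab (Finset.mem_insert.mpr (Or.inr (Finset.mem_singleton_self _)))
    rw [mem_pmSet] at haS hbS
    rcases lt_trichotomy a 0 with ha | ha | ha
    · rcases lt_trichotomy b 0 with hb | hb | hb
      · -- both negative : mirror is both positive
        have hmir := neg_pair hM hab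
        rw [Finset.pair_comm] at hmir
        exact absurd (hpos (-b) (-a) hmir (by omega) (by omega)) (by simp)
      · omega
      · -- mixed
        have := diag_of_mixed hM hab ha hb
        exact ⟨b, by omega, by omega, by rw [this, neg_neg, Finset.pair_comm]⟩
    · omega
    · exact absurd (hpos a b hab ha hlt) (by simp)
  ext B
  constructor
  · intro hB
    obtain ⟨a, b, hab, rfl⟩ := Finset.card_eq_two.mp (hM.1 B hB)
    rcases lt_or_gt_of_ne hab with h | h
    · obtain ⟨t, h1, h2, heq⟩ := haux a b hB h
      exact mem_diagM.mpr ⟨t, h1, h2, heq⟩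
    · rw [Finset.pair_comm] at hB ⊢
      obtain ⟨t, h1, h2, heq⟩ := haux b a hB h
      exact mem_diagM.mpr ⟨t, h1, h2, heq⟩
  · intro hB
    obtain ⟨t, h1, h2, rfl⟩ := mem_diagM.mp hB
    obtain ⟨y, hy, hty⟩ := partner_exists hM (x := t) (by rw [mem_pmSet]; omega)
    rcases lt_or_gt_of_ne hy with h | h
    · obtain ⟨s, hs1, hs2, heq⟩ := haux y t (by rwa [Finset.pair_comm] at hty) h
      have hts : (t:ℤ) ∈ ({s, -s} : Finset ℤ) := heq ▸ Finset.mem_insert.mpr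
        (Or.inr (Finset.mem_singleton_self _))
      have hys : y ∈ ({s, -s} : Finset ℤ) := heq ▸ Finset.mem_insert_self _ _
      simp only [Finset.mem_insert, Finset.mem_singleton] at hts hys
      have hy' : y = -t := by omega
      rw [← hy']
      exact hty
    · obtain ⟨s, hs1, hs2, heq⟩ := haux t y hty h
      have hts : (t:ℤ) ∈ ({s, -s} : Finset ℤ) := heq ▸ Finset.mem_insert_self _ _
      have hys : y ∈ ({s, -s} : Finset ℤ) := heq ▸ Finset.mem_insert.mpr
        (Or.inr (Finset.mem_singleton_self _))
      simp only [Finset.mem_insert, Finset.mem_singleton] at hts hys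
      have hy' : y = -t := by omega
      rw [← hy']
      exact hty

end NCSP

namespace NCSP

variable {S : Finset ℤ} {M : Finset (Finset ℤ)}

lemma transport (φ : ℤ → ℤ)
    (hmono : ∀ x ∈ S, ∀ y ∈ S, x < y → φ x < φ y)
    (hodd : ∀ x ∈ S, φ (-x) = -φ x)
    (hM : NCSPgen S M) :
    NCSPgen (S.image φ) (M.image (fun B => B.image φ)) := by
  have hinj : ∀ x ∈ S, ∀ y ∈ S, φ x = φ y → x = y := by
    intro x hx y hy hxy
    rcases lt_trichotomy x y with h | h | h
    · exact absurd hxy (ne_of_lt (hmono x hx y hy h))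
    · exact h
    · exact absurd hxy.symm (ne_of_lt (hmono y hy x hx h))
  have hrefl : ∀ x ∈ S, ∀ y ∈ S, φ x < φ y → x < y := by
    intro x hx y hy h
    rcases lt_trichotomy x y with h' | h' | h'
    · exact h'
    · subst h'; exact absurd h (lt_irrefl _)
    · exact absurd (hmono y hy x hx h') (not_lt.mpr (le_of_lt h))
  refine ⟨?_, ?_, ?_, ?_, ?_⟩
  · intro B' hB'
    obtain ⟨B, hB, rfl⟩ := Finset.mem_image.mp hB'
    rw [Finset.card_image_of_injOn
      (fun x hx y hy => hinj x (block_subset hM hB hx) y (block_subset hM hB hy))]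
    exact hM.1 B hB
  · intro B1' hB1' B2' hB2' hne
    simp only [Finset.mem_coe] at hB1' hB2'
    obtain ⟨B1, hB1, rfl⟩ := Finset.mem_image.mp hB1'
    obtain ⟨B2, hB2, rfl⟩ := Finset.mem_image.mp hB2'
    have hBne : B1 ≠ B2 := fun h => hne (by rw [h])
    have hd : Disjoint B1 B2 := hM.2.1 hB1 hB2 hBne
    rw [Finset.disjoint_left] at hd ⊢
    intro z hz1 hz2
    obtain ⟨x, hx, rfl⟩ := Finset.mem_image.mp hz1
    obtain ⟨y, hy, hxy⟩ := Finset.mem_image.mp hz2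
    have := hinj y (block_subset hM hB2 hy) x (block_subset hM hB1 hx) hxy
    exact hd hx (this ▸ hy)
  · ext z
    simp only [Finset.mem_biUnion, Finset.mem_image, id]
    constructor
    · rintro ⟨B', ⟨B, hB, rfl⟩, hz⟩
      obtain ⟨x, hx, rfl⟩ := Finset.mem_image.mp hz
      exact ⟨x, block_subset hM hB hx, rfl⟩
    · rintro ⟨x, hxS, rfl⟩
      obtain ⟨B, hB, hxB⟩ := exists_block hM hxS
      exact ⟨B.image φ, ⟨B, hB, rfl⟩, Finset.mem_image_of_mem φ hxB⟩
  · intro B' hB'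
    obtain ⟨B, hB, rfl⟩ := Finset.mem_image.mp hB'
    have h1 : (B.image φ).image (fun x => -x) = (B.image (fun x => -x)).image φ := by
      rw [Finset.image_image, Finset.image_image]
      apply Finset.image_congr
      intro x hx
      simp only [Function.comp]
      exact (hodd x (block_subset hM hB hx)).symm
    rw [h1]
    exact Finset.mem_image_of_mem _ (hM.2.2.2.1 B hB)
  · intro B1' hB1' B2' hB2' i hi j hj a ha b hb
    obtain ⟨B1, hB1, rfl⟩ := Finset.mem_image.mp hB1'
    obtain ⟨B2, hB2, rfl⟩ := Finset.mem_image.mp hB2'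
    obtain ⟨i0, hi0, rfl⟩ := Finset.mem_image.mp hi
    obtain ⟨j0, hj0, rfl⟩ := Finset.mem_image.mp hj
    obtain ⟨a0, ha0, rfl⟩ := Finset.mem_image.mp ha
    obtain ⟨b0, hb0, rfl⟩ := Finset.mem_image.mp hb
    rintro ⟨h1, h2, h3⟩
    have hi0S := block_subset hM hB1 hi0
    have hj0S := block_subset hM hB1 hj0
    have ha0S := block_subset hM hB2 ha0
    have hb0S := block_subset hM hB2 hb0
    exact hM.2.2.2.2 B1 hB1 B2 hB2 i0 hi0 j0 hj0 a0 ha0 b0 hb0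
      ⟨hrefl _ hi0S _ ha0S h1, hrefl _ ha0S _ hj0S h2, hrefl _ hj0S _ hb0S h3⟩

/-- removing a block and its mirror -/
lemma erase_pair (hM : NCSPgen S M) {B1 B2 : Finset ℤ} (hB1 : B1 ∈ M) (hB2 : B2 ∈ M)
    (hne : B1 ≠ B2) (hmir : B1.image (fun x => -x) = B2) :
    NCSPgen (S \ (B1 ∪ B2)) ((M.erase B1).erase B2) := by
  have hmem : ∀ B, B ∈ (M.erase B1).erase B2 ↔ B ∈ M ∧ B ≠ B1 ∧ B ≠ B2 := by
    intro B
    simp only [Finset.mem_erase]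
    tauto
  refine ⟨?_, ?_, ?_, ?_, ?_⟩
  · intro B hB
    exact hM.1 B ((hmem B).mp hB).1
  · intro x hx y hy hne'
    simp only [Finset.mem_coe, hmem] at hx hy
    exact hM.2.1 hx.1 hy.1 hne'
  · ext x
    simp only [Finset.mem_biUnion, Finset.mem_sdiff, Finset.mem_union, id, hmem]
    constructor
    · rintro ⟨B, ⟨hB, hne1, hne2⟩, hx⟩
      refine ⟨block_subset hM hB hx, ?_⟩
      rintro (h | h)
      · exact hne1 (block_eq hM hB hB1 hx h)
      · exact hne2 (block_eq hM hB hB2 hx h)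
    · rintro ⟨hxS, hx12⟩
      obtain ⟨B, hB, hxB⟩ := exists_block hM hxS
      refine ⟨B, ⟨hB, ?_, ?_⟩, hxB⟩
      · rintro rfl; exact hx12 (Or.inl hxB)
      · rintro rfl; exact hx12 (Or.inr hxB)
  · intro B hB
    rw [hmem] at hB ⊢
    obtain ⟨hBM, hn1, hn2⟩ := hB
    have hnegneg : ∀ C : Finset ℤ, (C.image (fun x : ℤ => -x)).image (fun x : ℤ => -x) = C := by
      intro C
      rw [Finset.image_image]
      have : ((fun x : ℤ => -x) ∘ (fun x : ℤ => -x)) = id := by funext; simp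
      rw [this, Finset.image_id]
    refine ⟨hM.2.2.2.1 B hBM, ?_, ?_⟩
    · rintro h
      apply hn2
      rw [← hnegneg B, h, hmir]
    · rintro h
      apply hn1
      rw [← hnegneg B, h, ← hmir, hnegneg]
  · intro B hB B' hB' i hi j hj a ha b hb
    rw [hmem] at hB hB'
    exact hM.2.2.2.2 B hB.1 B' hB'.1 i hi j hj a ha b hb

/-- adding an adjacent pair and its mirror -/
lemma union_adjacent (hM : NCSPgen S M) (a : ℤ) (ha : 1 ≤ a)
    (h1 : (a:ℤ) ∉ S) (h2 : a + 1 ∉ S) (h3 : -a ∉ S) (h4 : -(a+1) ∉ S) :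
    NCSPgen (S ∪ {a, a+1, -(a+1), -a})
      (M ∪ {({a, a+1} : Finset ℤ), ({-(a+1), -a} : Finset ℤ)}) := by
  have hBmem : ∀ B, B ∈ M ∪ {({a, a+1} : Finset ℤ), ({-(a+1), -a} : Finset ℤ)} ↔
      B ∈ M ∨ B = {a, a+1} ∨ B = {-(a+1), -a} := by
    intro B
    simp only [Finset.mem_union, Finset.mem_insert, Finset.mem_singleton]
  have hadj1 : ∀ x ∈ ({a, a+1} : Finset ℤ), x = a ∨ x = a + 1 := by
    intro x hx; simpa using hx
  have hadj2 : ∀ x ∈ ({-(a+1), -a} : Finset ℤ), x = -(a+1) ∨ x = -a := by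
    intro x hx; simpa using hx
  have hdisj1 : ∀ B ∈ M, Disjoint B ({a, a+1} : Finset ℤ) := by
    intro B hB
    rw [Finset.disjoint_left]
    intro x hx hx'
    rcases hadj1 x hx' with rfl | rfl
    · exact h1 (block_subset hM hB hx)
    · exact h2 (block_subset hM hB hx)
  have hdisj2 : ∀ B ∈ M, Disjoint B ({-(a+1), -a} : Finset ℤ) := by
    intro B hB
    rw [Finset.disjoint_left]
    intro x hx hx'
    rcases hadj2 x hx' with rfl | rfl
    · exact h4 (block_subset hM hB hx)
    · exact h3 (block_subset hM hB hx)
  have hdisj12 : Disjoint ({a, a+1} : Finset ℤ) ({-(a+1), -a} : Finset ℤ) := by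
    rw [Finset.disjoint_left]
    intro x hx hx'
    rcases hadj1 x hx with rfl | rfl <;> rcases hadj2 _ hx' with h | h <;> omega
  refine ⟨?_, ?_, ?_, ?_, ?_⟩
  · intro B hB
    rcases (hBmem B).mp hB with h | rfl | rfl
    · exact hM.1 B h
    · rw [Finset.card_insert_of_notMem (by rw [Finset.mem_singleton]; omega)]; rfl
    · rw [Finset.card_insert_of_notMem (by rw [Finset.mem_singleton]; omega)]; rfl
  · intro B hB B' hB' hne
    simp only [Finset.mem_coe, hBmem] at hB hB'
    rcases hB with hB | rfl | rfl <;> rcases hB' with hB' | rfl | rfl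
    · exact hM.2.1 hB hB' hne
    · exact hdisj1 B hB
    · exact hdisj2 B hB
    · exact (hdisj1 _ hB').symm
    · exact absurd rfl hne
    · exact hdisj12
    · exact (hdisj2 _ hB').symm
    · exact hdisj12.symm
    · exact absurd rfl hne
  · ext x
    simp only [Finset.mem_biUnion, Finset.mem_union, id, hBmem]
    constructor
    · rintro ⟨B, hB, hx⟩
      rcases hB with hB | rfl | rfl
      · exact Or.inl (block_subset hM hB hx)
      · right
        simp only [Finset.mem_insert, Finset.mem_singleton] at hx ⊢
        tauto
      · right
        simp only [Finset.mem_insert, Finset.mem_singleton] at hx ⊢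
        tauto
    · rintro (hx | hx)
      · obtain ⟨B, hB, hxB⟩ := exists_block hM hx
        exact ⟨B, Or.inl hB, hxB⟩
      · simp only [Finset.mem_insert, Finset.mem_singleton] at hx
        rcases hx with h | h | h | h
        · exact ⟨{a, a+1}, Or.inr (Or.inl rfl), by rw [h]; simp⟩
        · exact ⟨{a, a+1}, Or.inr (Or.inl rfl), by rw [h]; simp⟩
        · exact ⟨{-(a+1), -a}, Or.inr (Or.inr rfl), by rw [h]; simp⟩
        · exact ⟨{-(a+1), -a}, Or.inr (Or.inr rfl), by rw [h]; simp⟩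
  · intro B hB
    rcases (hBmem B).mp hB with h | rfl | rfl
    · exact (hBmem _).mpr (Or.inl (hM.2.2.2.1 B h))
    · rw [Finset.image_insert, Finset.image_singleton]
      refine (hBmem _).mpr (Or.inr (Or.inr ?_))
      rw [Finset.pair_comm]
    · rw [Finset.image_insert, Finset.image_singleton]
      refine (hBmem _).mpr (Or.inr (Or.inl ?_))
      rw [neg_neg, neg_neg, Finset.pair_comm]
  · intro B hB B' hB' i hi j hj x hx y hy
    rintro ⟨hc1, hc2, hc3⟩
    rcases (hBmem B).mp hB with hBM | rfl | rfl
    · rcases (hBmem B').mp hB' with hBM' | rfl | rfl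
      · exact hM.2.2.2.2 B hBM B' hBM' i hi j hj x hx y hy ⟨hc1, hc2, hc3⟩
      · rcases hadj1 x hx with rfl | rfl <;> rcases hadj1 y hy with h | h <;> omega
      · rcases hadj2 x hx with rfl | rfl <;> rcases hadj2 y hy with h | h <;> omega
    · rcases hadj1 i hi with rfl | rfl <;> rcases hadj1 j hj with h | h <;> omega
    · rcases hadj2 i hi with rfl | rfl <;> rcases hadj2 j hj with h | h <;> omega

end NCSP

namespace NCSP

/-- shift map inserting a gap at `±(i-1), ±i` -/
def ψm (i : ℕ) (x : ℤ) : ℤ :=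
  if (i:ℤ) - 1 ≤ x then x + 2 else if x ≤ -((i:ℤ) - 1) then x - 2 else x

/-- inverse shift map -/
def χm (i : ℕ) (x : ℤ) : ℤ :=
  if (i:ℤ) + 1 ≤ x then x - 2 else if x ≤ -((i:ℤ) + 1) then x + 2 else x

variable {n i : ℕ}

lemma ψm_mono (hi : 2 ≤ i) {x y : ℤ} (h : x < y) : ψm i x < ψm i y := by
  unfold ψm
  split_ifs <;> omega

lemma ψm_odd (hi : 2 ≤ i) (x : ℤ) : ψm i (-x) = -ψm i x := by
  unfold ψm
  split_ifs <;> omega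

lemma ψm_pos (hi : 2 ≤ i) {x : ℤ} (h : 0 < x) : 0 < ψm i x := by
  unfold ψm
  split_ifs <;> omega

lemma ψm_pos' (hi : 2 ≤ i) {x : ℤ} (h : 0 < ψm i x) : 0 < x := by
  unfold ψm at h
  split_ifs at h <;> omega

lemma χm_odd (x : ℤ) : χm i (-x) = -χm i x := by
  unfold χm
  split_ifs <;> omega

lemma ψm_χm (hi : 2 ≤ i) {x : ℤ} (h0 : x ≠ 0) (h1 : x ≠ (i:ℤ)-1) (h2 : x ≠ i)
    (h3 : x ≠ -((i:ℤ)-1)) (h4 : x ≠ -(i:ℤ)) : ψm i (χm i x) = x := by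
  unfold ψm χm
  split_ifs <;> omega

lemma χm_ψm (hi : 2 ≤ i) (x : ℤ) : χm i (ψm i x) = x := by
  unfold ψm χm
  split_ifs <;> omega

lemma χm_mono (hi : 2 ≤ i) {x y : ℤ}
    (hx1 : x ≠ (i:ℤ)-1) (hx2 : x ≠ i) (hx3 : x ≠ -((i:ℤ)-1)) (hx4 : x ≠ -(i:ℤ))
    (hy1 : y ≠ (i:ℤ)-1) (hy2 : y ≠ i) (hy3 : y ≠ -((i:ℤ)-1)) (hy4 : y ≠ -(i:ℤ))
    (h : x < y) : χm i x < χm i y := by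
  unfold χm
  split_ifs <;> omega

/-- small positive values are fixed by ψm and only reached from themselves -/
lemma ψm_small (hi : 2 ≤ i) {x : ℤ} (h1 : 0 < x) (h2 : x < (i:ℤ)-1) : ψm i x = x := by
  unfold ψm
  split_ifs <;> omega

lemma ψm_eq_small (hi : 2 ≤ i) {x v : ℤ} (hv : 0 < v) (hv2 : v < (i:ℤ)-1)
    (h : ψm i x = v) : x = v := by
  unfold ψm at h
  split_ifs at h <;> omega

lemma ψm_big (hi : 2 ≤ i) {x : ℤ} (h1 : (i:ℤ)-1 ≤ x) : ψm i x = x + 2 := by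
  unfold ψm
  split_ifs <;> omega

lemma ψm_eq_big (hi : 2 ≤ i) {x v : ℤ} (hv : (i:ℤ)+1 ≤ v) (h : ψm i x = v) : x = v - 2 := by
  unfold ψm at h
  split_ifs at h <;> omega

lemma pair_eq_pair {c d u v : ℤ} (h : ({c, d} : Finset ℤ) = {u, v}) :
    (c = u ∧ d = v) ∨ (c = v ∧ d = u) := by
  have hc : c ∈ ({u, v} : Finset ℤ) := h ▸ Finset.mem_insert_self _ _
  have hd : d ∈ ({u, v} : Finset ℤ) := h ▸ Finset.mem_insert.mpr (Or.inr (Finset.mem_singleton_self _))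
  have hu : u ∈ ({c, d} : Finset ℤ) := h ▸ Finset.mem_insert_self _ _
  have hv : v ∈ ({c, d} : Finset ℤ) := h ▸ Finset.mem_insert.mpr (Or.inr (Finset.mem_singleton_self _))
  simp only [Finset.mem_insert, Finset.mem_singleton] at hc hd hu hv
  omega

lemma image_pair (φ : ℤ → ℤ) (x y : ℤ) :
    ({x, y} : Finset ℤ).image φ = {φ x, φ y} := by
  rw [Finset.image_insert, Finset.image_singleton]

/-- the image of `pmSet (n-2)` under `ψm i`, together with the four removed points,
is `pmSet n`. -/
lemma ψm_image_union (hi : 2 ≤ i) (hin : i ≤ n) :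
    ((pmSet (n-2)).image (ψm i)) ∪
      {(i:ℤ)-1, (i:ℤ), -(i:ℤ), -((i:ℤ)-1)} = pmSet n := by
  have hn2 : ((n - 2 : ℕ) : ℤ) = (n:ℤ) - 2 := by omega
  ext z
  simp only [Finset.mem_union, Finset.mem_image, mem_pmSet, Finset.mem_insert,
    Finset.mem_singleton, hn2]
  constructor
  · rintro (⟨x, hx, rfl⟩ | h | h | h | h)
    · unfold ψm
      split_ifs <;> omega
    all_goals omega
  · intro hz
    by_cases hz1 : z = (i:ℤ)-1
    · tauto
    by_cases hz2 : z = (i:ℤ)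
    · right; omega
    by_cases hz3 : z = -((i:ℤ)-1)
    · right; omega
    by_cases hz4 : z = -(i:ℤ)
    · right; omega
    left
    refine ⟨χm i z, ?_, ψm_χm hi (by omega) hz1 hz2 hz3 hz4⟩
    unfold χm
    split_ifs <;> omega

lemma ψm_image_not_mem (hi : 2 ≤ i) {v : ℤ}
    (hv : v = (i:ℤ)-1 ∨ v = (i:ℤ) ∨ v = -((i:ℤ)-1) ∨ v = -(i:ℤ)) :
    v ∉ (pmSet (n-2)).image (ψm i) := by
  rintro hmem
  obtain ⟨x, hx, hψ⟩ := Finset.mem_image.mp hmem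
  rw [mem_pmSet] at hx
  unfold ψm at hψ
  split_ifs at hψ <;> omega

lemma χm_image (hi : 2 ≤ i) (hin : i ≤ n) :
    (pmSet n \ (({(i:ℤ)-1, (i:ℤ)} : Finset ℤ) ∪ ({-(i:ℤ), -((i:ℤ)-1)} : Finset ℤ))).image (χm i)
      = pmSet (n-2) := by
  have hn2 : ((n - 2 : ℕ) : ℤ) = (n:ℤ) - 2 := by omega
  ext z
  simp only [Finset.mem_image, Finset.mem_sdiff, Finset.mem_union, mem_pmSet,
    Finset.mem_insert, Finset.mem_singleton, hn2]
  constructor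
  · rintro ⟨x, ⟨hx1, hx2⟩, rfl⟩
    push_neg at hx2
    unfold χm
    split_ifs <;> omega
  · intro hz
    refine ⟨ψm i z, ⟨?_, ?_⟩, χm_ψm hi z⟩
    · unfold ψm
      split_ifs <;> omega
    · push_neg
      unfold ψm
      split_ifs <;> omega

end NCSP

namespace NCSP

variable {n : ℕ} {M : Finset (Finset ℤ)}

/-- if `i` is the first closer, its partner is `i-1`. -/
lemma first_D (hM : NCSPgen (pmSet n) M) {i : ℕ} (hin : i ≤ n)
    (hD : wordOf M i = false) (hmin : ∀ k, 1 ≤ k → k < i → wordOf M k = true) :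
    ({(i:ℤ)-1, (i:ℤ)} : Finset ℤ) ∈ M := by
  obtain ⟨q, hq1, hq2, hq3⟩ := wordOf_eq_false_iff.mp hD
  suffices h : q = (i:ℤ)-1 by rwa [← h]
  by_contra hne
  have hq4 : q < (i:ℤ) - 1 := by omega
  set t : ℤ := q + 1 with ht
  have htpm : t ∈ pmSet n := by rw [mem_pmSet]; omega
  obtain ⟨p, hpt, hptM⟩ := partner_exists hM htpm
  -- hptM : {t, p} ∈ M
  have hppm := block_subset hM hptM (Finset.mem_insert.mpr (Or.inr (Finset.mem_singleton_self _)))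
  rw [mem_pmSet] at hppm
  rcases lt_trichotomy p 0 with hp | hp | hp
  · -- p < 0 : mixed block, so p = -t; crossing with {q, i}
    have hdg : t = -p := diag_of_mixed hM (by rwa [Finset.pair_comm] at hptM) hp (by omega)
    have hmem : ({-t, t} : Finset ℤ) ∈ M := by
      rw [Finset.pair_comm] at hptM
      rwa [show p = -t from by omega] at hptM
    exact noncross hM hmem hq3 (by omega) (by omega) (by omega)
  · omega
  · rcases lt_trichotomy p t with hpt' | hpt' | hpt'
    · -- 0 < p < t : t would be a closer before i
      have hcast : ((t.toNat : ℤ)) = t := Int.toNat_of_nonneg (by omega)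
      have := wordOf_eq_true_iff.mp (hmin t.toNat (by omega) (by omega)) p hp
        (by omega) (by rw [hcast]; rwa [Finset.pair_comm] at hptM)
      exact this
    · exact hpt hpt'
    · rcases lt_trichotomy p (i:ℤ) with hpi | hpi | hpi
      · -- t < p < i : p would be a closer before i
        have hcast : ((p.toNat : ℤ)) = p := Int.toNat_of_nonneg (by omega)
        have := wordOf_eq_true_iff.mp (hmin p.toNat (by omega) (by omega)) t (by omega)
          (by omega) (by rw [hcast]; exact hptM)
        exact this
      · -- p = i : then t = q, contradiction
        rw [hpi] at hptM
        have := partner_unique hM (by rwa [Finset.pair_comm] at hptM)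
          (by rwa [Finset.pair_comm] at hq3)
        omega
      · -- p > i : crossing q < t < i < p
        exact noncross hM hq3 hptM (by omega) (by omega) (by omega)

end NCSP

namespace NCSP

variable {n i : ℕ}

lemma ψm_ne (hi : 2 ≤ i) (x : ℤ) : ψm i x ≠ (i:ℤ)-1 ∧ ψm i x ≠ i ∧
    ψm i x ≠ -((i:ℤ)-1) ∧ ψm i x ≠ -(i:ℤ) := by
  unfold ψm
  split_ifs <;> omega

lemma ψm_lt_iff (hi : 2 ≤ i) {x y : ℤ} : ψm i x < ψm i y ↔ x < y := by
  unfold ψm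
  split_ifs <;> omega

lemma χm_small (hi : 2 ≤ i) {x : ℤ} (h1 : -((i:ℤ)+1) < x) (h2 : x < (i:ℤ)+1) :
    χm i x = x := by
  unfold χm
  split_ifs <;> omega

lemma χm_eq_small (hi : 2 ≤ i) {x v : ℤ} (hv1 : 0 < v) (hv2 : v < (i:ℤ)-1)
    (h : χm i x = v) : x = v := by
  unfold χm at h
  split_ifs at h <;> omega

lemma χm_big (hi : 2 ≤ i) {x : ℤ} (h : (i:ℤ)+1 ≤ x) : χm i x = x - 2 := by
  unfold χm
  split_ifs <;> omega

lemma χm_eq_big (hi : 2 ≤ i) {x v : ℤ} (hv1 : 0 < v) (hv2 : (i:ℤ)-1 ≤ v)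
    (hx1 : x ≠ (i:ℤ)-1) (hx2 : x ≠ i) (h : χm i x = v) : x = v + 2 := by
  unfold χm at h
  split_ifs at h <;> omega

lemma χm_pos (hi : 2 ≤ i) {x : ℤ} (h : 0 < x) : 0 < χm i x := by
  unfold χm
  split_ifs <;> omega

lemma χm_pos' (hi : 2 ≤ i) {x : ℤ} (h : 0 < χm i x) : 0 < x := by
  unfold χm at h
  split_ifs at h <;> omega

lemma pair_mem_image (φ : ℤ → ℤ) {T : Finset (Finset ℤ)} {x y : ℤ}
    (h : ({x, y} : Finset ℤ) ∈ T) :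
    ({φ x, φ y} : Finset ℤ) ∈ T.image (fun B => B.image φ) := by
  rw [← image_pair]
  exact Finset.mem_image_of_mem _ h

lemma pairs_of_image (φ : ℤ → ℤ) {T : Finset (Finset ℤ)}
    (hcard : ∀ B ∈ T, B.card = 2) {u v : ℤ}
    (h : ({u, v} : Finset ℤ) ∈ T.image (fun B => B.image φ)) :
    ∃ x y : ℤ, φ x = u ∧ φ y = v ∧ ({x, y} : Finset ℤ) ∈ T := by
  obtain ⟨B, hB, hBeq⟩ := Finset.mem_image.mp h
  obtain ⟨x, y, hxy, rfl⟩ := Finset.card_eq_two.mp (hcard B hB)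
  rw [image_pair] at hBeq
  rcases pair_eq_pair hBeq with ⟨h1, h2⟩ | ⟨h1, h2⟩
  · exact ⟨x, y, h1, h2, hB⟩
  · exact ⟨y, x, h2, h1, by rwa [Finset.pair_comm]⟩

/-- deleting two adjacent letters (a `true` at `i-1`, `false` at `i`) from a word -/
lemma wcnt_shift {w : ℕ → Bool} (hi : 2 ≤ i)
    (hwi1 : w (i-1) = true) (hwi : w i = false) (b : Bool) :
    ∀ m : ℕ, wcnt w b (i + m) =
      wcnt (fun k => if k ≤ i-2 then w k else w (k+2)) b (i - 2 + m) + 1 := by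
  intro m
  induction m with
  | zero =>
    have h1 : i + 0 = (i - 2) + 1 + 1 := by omega
    rw [h1, wcnt_succ, wcnt_succ]
    rw [show i - 2 + 1 = i - 1 from by omega, show i - 1 + 1 = i from by omega]
    have hcongr : wcnt w b (i-2) =
        wcnt (fun k => if k ≤ i-2 then w k else w (k+2)) b (i-2) := by
      apply wcnt_congr
      intro j _ hj
      rw [if_pos hj]
    rw [hwi1, hwi]
    cases b <;> simp <;> omega
  | succ m ihm =>
    rw [show i + (m+1) = (i + m) + 1 from by omega, wcnt_succ, ihm,
      show i - 2 + (m+1) = (i - 2 + m) + 1 from by omega, wcnt_succ]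
    have : (if i - 2 + m + 1 ≤ i - 2 then w (i - 2 + m + 1) else w (i - 2 + m + 1 + 2))
        = w (i + m + 1) := by
      rw [if_neg (by omega), show i - 2 + m + 1 + 2 = i + m + 1 from by omega]
    rw [this]
    omega

lemma ballot_deleted {w : ℕ → Bool} (hw : BallotW n w) (hi : 2 ≤ i) (hin : i ≤ n)
    (hwi1 : w (i-1) = true) (hwi : w i = false) :
    BallotW (n-2) (fun k => if k ≤ i-2 then w k else w (k+2)) := by
  intro k hk
  rcases le_or_gt k (i-2) with h | h
  · have hc : ∀ b, wcnt (fun k => if k ≤ i-2 then w k else w (k+2)) b k = wcnt w b k := by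
      intro b
      apply wcnt_congr
      intro j _ hj
      rw [if_pos (by omega)]
    rw [hc, hc]
    exact hw k (by omega)
  · have hm := fun b => wcnt_shift hi hwi1 hwi b (k - (i-2))
    rw [show i - 2 + (k - (i-2)) = k from by omega, show i + (k - (i-2)) = k + 2 from by omega]
      at hm
    have := hw (k+2) (by omega)
    have h1 := hm false
    have h2 := hm true
    omega

end NCSP

namespace NCSP

theorem key_theorem : ∀ n : ℕ, ∀ w : ℕ → Bool, BallotW n w →
    ∃! M : Finset (Finset ℤ), NCSPgen (pmSet n) M ∧
      ∀ k : ℕ, 1 ≤ k → k ≤ n → wordOf M k = w k := by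
  intro n
  induction n using Nat.strong_induction_on with
  | _ n ih =>
  intro w hw
  by_cases hall : ∀ k : ℕ, 1 ≤ k → k ≤ n → w k = true
  · refine ⟨diagM n, ⟨diag_NCSP, fun k h1 h2 => by rw [wordOf_diag, hall k h1 h2]⟩, ?_⟩
    rintro M ⟨hM, hword⟩
    exact eq_diag_of_all_true hM (fun k h1 h2 => by rw [hword k h1 h2]; exact hall k h1 h2)
  · push_neg at hall
    obtain ⟨k0, hk01, hk02, hk03⟩ := hall
    have hex : ∃ k : ℕ, 1 ≤ k ∧ k ≤ n ∧ w k = false :=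
      ⟨k0, hk01, hk02, Bool.eq_false_iff.mpr hk03⟩
    classical
    obtain ⟨i, ⟨hi1, hin, hifalse⟩, hmin'⟩ :
        ∃ i : ℕ, (1 ≤ i ∧ i ≤ n ∧ w i = false) ∧
          ∀ k, k < i → ¬(1 ≤ k ∧ k ≤ n ∧ w k = false) :=
      ⟨Nat.find hex, Nat.find_spec hex, fun k hk => Nat.find_min hex hk⟩
    have hmin : ∀ k : ℕ, 1 ≤ k → k < i → w k = true := by
      intro k h1 h2
      by_contra hfb
      exact hmin' k h2 ⟨h1, by omega, Bool.eq_false_iff.mpr hfb⟩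
    have hi2 : 2 ≤ i := by
      rcases Nat.lt_or_ge i 2 with h | h
      · exfalso
        have hieq : i = 1 := by omega
        subst hieq
        have hb := hw 1 (by omega)
        rw [wcnt_succ, wcnt_succ, wcnt_zero, wcnt_zero] at hb
        simp [hifalse] at hb
      · exact h
    have hw' : BallotW (n-2) (fun k => if k ≤ i-2 then w k else w (k+2)) :=
      ballot_deleted hw hi2 hin (hmin (i-1) (by omega) (by omega)) hifalse
    obtain ⟨M', ⟨hM', hword'0⟩, huniq'⟩ := ih (n-2) (by omega) _ hw'
    have hword' : ∀ k, 1 ≤ k → k ≤ n-2 →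
        wordOf M' k = if k ≤ i-2 then w k else w (k+2) := hword'0
    -- the constructed matching
    have hMψ := transport (ψm i) (fun x _ y _ h => ψm_mono hi2 h)
      (fun x _ => ψm_odd hi2 x) hM'
    have hMM : NCSPgen (pmSet n) (M'.image (fun B => B.image (ψm i)) ∪
        {({(i:ℤ)-1, (i:ℤ)} : Finset ℤ), ({-(i:ℤ), -((i:ℤ)-1)} : Finset ℤ)}) := by
      have hu := union_adjacent hMψ ((i:ℤ)-1) (by omega)
        (ψm_image_not_mem hi2 (Or.inl rfl))
        (ψm_image_not_mem hi2 (Or.inr (Or.inl (by ring))))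
        (ψm_image_not_mem hi2 (Or.inr (Or.inr (Or.inl rfl))))
        (ψm_image_not_mem hi2 (Or.inr (Or.inr (Or.inr (by ring)))))
      rw [show (i:ℤ)-1+1 = (i:ℤ) from by ring] at hu
      rwa [ψm_image_union hi2 hin] at hu
    -- its word
    have hwMM : ∀ k : ℕ, 1 ≤ k → k ≤ n →
        wordOf (M'.image (fun B => B.image (ψm i)) ∪
          {({(i:ℤ)-1, (i:ℤ)} : Finset ℤ), ({-(i:ℤ), -((i:ℤ)-1)} : Finset ℤ)}) k = w k := by
      intro k hk1 hk2
      rcases lt_trichotomy k i with hki | hki | hki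
      · rcases Nat.lt_or_ge k (i-1) with hks | hks
        · -- k ≤ i-2
          cases hc : w k
          · have h1 : wordOf M' k = false := by
              rw [hword' k hk1 (by omega), if_pos (by omega), hc]
            obtain ⟨j, hj1, hj2, hj3⟩ := wordOf_eq_false_iff.mp h1
            have hmem := pair_mem_image (ψm i) hj3
            rw [ψm_small hi2 hj1 (by omega), ψm_small hi2 (by omega) (by omega)] at hmem
            rw [wordOf_eq_false_iff]
            exact ⟨j, hj1, hj2, Finset.mem_union_left _ hmem⟩
          · rw [wordOf_eq_true_iff]
            intro j hj1 hj2 hmem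
            rcases Finset.mem_union.mp hmem with hmem | hmem
            · obtain ⟨x, y, hx, hy, hxy⟩ := pairs_of_image (ψm i) hM'.1 hmem
              have hy' : y = (k:ℤ) := ψm_eq_small hi2 (by omega) (by omega) hy
              have hx' : x = j := ψm_eq_small hi2 hj1 (by omega) hx
              rw [hx', hy'] at hxy
              have hfd : wordOf M' k = false := wordOf_eq_false_iff.mpr ⟨j, hj1, hj2, hxy⟩
              rw [hword' k hk1 (by omega), if_pos (by omega), hc] at hfd
              exact Bool.noConfusion hfd
            · rcases Finset.mem_insert.mp hmem with h | h
              · rcases pair_eq_pair h with ⟨e1, e2⟩ | ⟨e1, e2⟩ <;> omega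
              · rw [Finset.mem_singleton] at h
                rcases pair_eq_pair h with ⟨e1, e2⟩ | ⟨e1, e2⟩ <;> omega
        · -- k = i-1
          rw [hmin k hk1 hki, wordOf_eq_true_iff]
          intro j hj1 hj2 hmem
          rcases Finset.mem_union.mp hmem with hmem | hmem
          · obtain ⟨x, y, hx, hy, hxy⟩ := pairs_of_image (ψm i) hM'.1 hmem
            have hkeq : (k:ℤ) = (i:ℤ)-1 := by omega
            rw [hkeq] at hy
            exact (ψm_ne hi2 y).1 hy
          · rcases Finset.mem_insert.mp hmem with h | h
            · rcases pair_eq_pair h with ⟨e1, e2⟩ | ⟨e1, e2⟩ <;> omega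
            · rw [Finset.mem_singleton] at h
              rcases pair_eq_pair h with ⟨e1, e2⟩ | ⟨e1, e2⟩ <;> omega
      · -- k = i
        rw [hki, hifalse, wordOf_eq_false_iff]
        exact ⟨(i:ℤ)-1, by omega, by omega,
          Finset.mem_union_right _ (Finset.mem_insert_self _ _)⟩
      · -- k > i
        have hkc : ((k-2:ℕ):ℤ) = (k:ℤ)-2 := by omega
        have hwk : w k = (if k-2 ≤ i-2 then w (k-2) else w (k-2+2)) := by
          rw [if_neg (by omega), show k-2+2 = k from by omega]
        cases hc : w k
        · have h1 : wordOf M' (k-2) = false := by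
            rw [hword' (k-2) (by omega) (by omega), ← hwk, hc]
          obtain ⟨j, hj1, hj2, hj3⟩ := wordOf_eq_false_iff.mp h1
          rw [hkc] at hj2 hj3
          have hmem := pair_mem_image (ψm i) hj3
          rw [ψm_big hi2 (show (i:ℤ)-1 ≤ (k:ℤ)-2 by omega),
            show (k:ℤ)-2+2 = (k:ℤ) from by ring] at hmem
          have hlt : ψm i j < ψm i ((k:ℤ)-2) := ψm_mono hi2 hj2
          rw [ψm_big hi2 (show (i:ℤ)-1 ≤ (k:ℤ)-2 by omega),
            show (k:ℤ)-2+2 = (k:ℤ) from by ring] at hlt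
          rw [wordOf_eq_false_iff]
          exact ⟨ψm i j, ψm_pos hi2 hj1, hlt, Finset.mem_union_left _ hmem⟩
        · rw [wordOf_eq_true_iff]
          intro j hj1 hj2 hmem
          rcases Finset.mem_union.mp hmem with hmem | hmem
          · obtain ⟨x, y, hx, hy, hxy⟩ := pairs_of_image (ψm i) hM'.1 hmem
            have hy' : y = (k:ℤ)-2 := ψm_eq_big hi2 (by omega) hy
            have hx0 : 0 < x := ψm_pos' hi2 (by rw [hx]; exact hj1)
            have hxy' : x < y := (ψm_lt_iff hi2).mp (by rw [hx, hy]; exact hj2)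
            rw [hy'] at hxy hxy'
            have hfd : wordOf M' (k-2) = false := wordOf_eq_false_iff.mpr
              ⟨x, hx0, by rw [hkc]; exact hxy', by rw [hkc]; exact hxy⟩
            rw [hword' (k-2) (by omega) (by omega), ← hwk, hc] at hfd
            exact Bool.noConfusion hfd
          · rcases Finset.mem_insert.mp hmem with h | h
            · rcases pair_eq_pair h with ⟨e1, e2⟩ | ⟨e1, e2⟩ <;> omega
            · rw [Finset.mem_singleton] at h
              rcases pair_eq_pair h with ⟨e1, e2⟩ | ⟨e1, e2⟩ <;> omega
    refine ⟨_, ⟨hMM, hwMM⟩, ?_⟩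
    -- uniqueness
    rintro M ⟨hM, hword⟩
    have hwMi : wordOf M i = false := by rw [hword i (by omega) hin, hifalse]
    have hB1M : ({(i:ℤ)-1, (i:ℤ)} : Finset ℤ) ∈ M :=
      first_D hM hin hwMi (fun k h1 h2 => by rw [hword k h1 (by omega)]; exact hmin k h1 h2)
    have hB2M : ({-(i:ℤ), -((i:ℤ)-1)} : Finset ℤ) ∈ M := by
      have := neg_pair hM hB1M
      rwa [Finset.pair_comm] at this
    have hB12 : ({(i:ℤ)-1, (i:ℤ)} : Finset ℤ) ≠ ({-(i:ℤ), -((i:ℤ)-1)} : Finset ℤ) := by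
      intro h
      rcases pair_eq_pair h with ⟨e1, e2⟩ | ⟨e1, e2⟩ <;> omega
    have hmir : ({(i:ℤ)-1, (i:ℤ)} : Finset ℤ).image (fun x => -x)
        = ({-(i:ℤ), -((i:ℤ)-1)} : Finset ℤ) := by
      rw [image_pair, Finset.pair_comm]
    have hN := erase_pair hM hB1M hB2M hB12 hmir
    have hSub : ∀ x ∈ pmSet n \ (({(i:ℤ)-1, (i:ℤ)} : Finset ℤ) ∪
        ({-(i:ℤ), -((i:ℤ)-1)} : Finset ℤ)),
        x ≠ 0 ∧ x ≠ (i:ℤ)-1 ∧ x ≠ i ∧ x ≠ -((i:ℤ)-1) ∧ x ≠ -(i:ℤ) := by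
      intro x hx
      rw [Finset.mem_sdiff, Finset.mem_union, mem_pmSet] at hx
      simp only [Finset.mem_insert, Finset.mem_singleton] at hx
      push_neg at hx
      omega
    have hNmem : ∀ C : Finset ℤ,
        C ∈ (M.erase ({(i:ℤ)-1, (i:ℤ)} : Finset ℤ)).erase ({-(i:ℤ), -((i:ℤ)-1)} : Finset ℤ) ↔
        C ∈ M ∧ C ≠ ({(i:ℤ)-1, (i:ℤ)} : Finset ℤ) ∧ C ≠ ({-(i:ℤ), -((i:ℤ)-1)} : Finset ℤ) := by
      intro C
      simp only [Finset.mem_erase]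
      tauto
    have hM'' := transport (χm i)
      (fun x hx y hy h => by
        obtain ⟨a1, a2, a3, a4, a5⟩ := hSub x hx
        obtain ⟨b1, b2, b3, b4, b5⟩ := hSub y hy
        exact χm_mono hi2 a2 a3 a4 a5 b2 b3 b4 b5 h)
      (fun x _ => χm_odd x) hN
    rw [χm_image hi2 hin] at hM''
    have hword'' : ∀ k, 1 ≤ k → k ≤ n-2 →
        wordOf (((M.erase ({(i:ℤ)-1, (i:ℤ)} : Finset ℤ)).erase
          ({-(i:ℤ), -((i:ℤ)-1)} : Finset ℤ)).image (fun B => B.image (χm i))) k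
          = (if k ≤ i-2 then w k else w (k+2)) := by
      intro k hk1 hk2
      rcases Nat.lt_or_ge k (i-1) with hks | hks
      · -- k ≤ i-2
        rw [if_pos (by omega)]
        cases hc : w k
        · have h1 : wordOf M k = false := by rw [hword k hk1 (by omega), hc]
          obtain ⟨j, hj1, hj2, hj3⟩ := wordOf_eq_false_iff.mp h1
          have hne1 : ({j, (k:ℤ)} : Finset ℤ) ≠ ({(i:ℤ)-1, (i:ℤ)} : Finset ℤ) := by
            intro h
            rcases pair_eq_pair h with ⟨e1, e2⟩ | ⟨e1, e2⟩ <;> omega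
          have hne2 : ({j, (k:ℤ)} : Finset ℤ) ≠ ({-(i:ℤ), -((i:ℤ)-1)} : Finset ℤ) := by
            intro h
            rcases pair_eq_pair h with ⟨e1, e2⟩ | ⟨e1, e2⟩ <;> omega
          have hjN : ({j, (k:ℤ)} : Finset ℤ) ∈ (M.erase _).erase _ :=
            (hNmem _).mpr ⟨hj3, hne1, hne2⟩
          have hmem := pair_mem_image (χm i) hjN
          rw [χm_small hi2 (by omega) (by omega), χm_small hi2 (by omega) (by omega)] at hmem
          rw [wordOf_eq_false_iff]
          exact ⟨j, hj1, hj2, hmem⟩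
        · rw [wordOf_eq_true_iff]
          intro j hj1 hj2 hmem
          obtain ⟨x, y, hx, hy, hxy⟩ := pairs_of_image (χm i) hN.1 hmem
          have hy' : y = (k:ℤ) := χm_eq_small hi2 (by omega) (by omega) hy
          have hx' : x = j := χm_eq_small hi2 hj1 (by omega) hx
          rw [hx', hy'] at hxy
          have hjM : ({j, (k:ℤ)} : Finset ℤ) ∈ M := ((hNmem _).mp hxy).1
          have hfd : wordOf M k = false := wordOf_eq_false_iff.mpr ⟨j, hj1, hj2, hjM⟩
          rw [hword k hk1 (by omega), hc] at hfd
          exact Bool.noConfusion hfd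
      · -- k ≥ i-1
        rw [if_neg (by omega)]
        have hkc2 : ((k+2:ℕ):ℤ) = (k:ℤ)+2 := by push_cast; ring
        cases hc : w (k+2)
        · have h1 : wordOf M (k+2) = false := by
            rw [hword (k+2) (by omega) (by omega), hc]
          obtain ⟨j, hj1, hj2, hj3⟩ := wordOf_eq_false_iff.mp h1
          rw [hkc2] at hj2 hj3
          have hne1 : ({j, (k:ℤ)+2} : Finset ℤ) ≠ ({(i:ℤ)-1, (i:ℤ)} : Finset ℤ) := by
            intro h
            rcases pair_eq_pair h with ⟨e1, e2⟩ | ⟨e1, e2⟩ <;> omega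
          have hne2 : ({j, (k:ℤ)+2} : Finset ℤ) ≠ ({-(i:ℤ), -((i:ℤ)-1)} : Finset ℤ) := by
            intro h
            rcases pair_eq_pair h with ⟨e1, e2⟩ | ⟨e1, e2⟩ <;> omega
          have hjN : ({j, (k:ℤ)+2} : Finset ℤ) ∈ (M.erase _).erase _ :=
            (hNmem _).mpr ⟨hj3, hne1, hne2⟩
          have hjS := block_subset hN hjN
          obtain ⟨a1, a2, a3, a4, a5⟩ := hSub j (hjS (Finset.mem_insert_self _ _))
          have hmem := pair_mem_image (χm i) hjN
          rw [χm_big hi2 (show (i:ℤ)+1 ≤ (k:ℤ)+2 by omega),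
            show (k:ℤ)+2-2 = (k:ℤ) from by ring] at hmem
          have hlt : χm i j < χm i ((k:ℤ)+2) :=
            χm_mono hi2 a2 a3 a4 a5 (show (k:ℤ)+2 ≠ (i:ℤ)-1 by omega)
              (show (k:ℤ)+2 ≠ (i:ℤ) by omega) (show (k:ℤ)+2 ≠ -((i:ℤ)-1) by omega)
              (show (k:ℤ)+2 ≠ -(i:ℤ) by omega) hj2
          rw [χm_big hi2 (show (i:ℤ)+1 ≤ (k:ℤ)+2 by omega),
            show (k:ℤ)+2-2 = (k:ℤ) from by ring] at hlt
          rw [wordOf_eq_false_iff]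
          exact ⟨χm i j, χm_pos hi2 hj1, hlt, hmem⟩
        · rw [wordOf_eq_true_iff]
          intro j hj1 hj2 hmem
          obtain ⟨x, y, hx, hy, hxy⟩ := pairs_of_image (χm i) hN.1 hmem
          have hyS := block_subset hN hxy
          obtain ⟨b1, b2, b3, b4, b5⟩ := hSub y
            (hyS (Finset.mem_insert.mpr (Or.inr (Finset.mem_singleton_self _))))
          obtain ⟨a1, a2, a3, a4, a5⟩ := hSub x (hyS (Finset.mem_insert_self _ _))
          have hy' : y = (k:ℤ)+2 := χm_eq_big hi2 (by omega) (by omega) b2 b3 hy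
          have hx0 : 0 < x := χm_pos' hi2 (by rw [hx]; exact hj1)
          have hxyl : x < y := by
            rcases lt_trichotomy x y with h | h | h
            · exact h
            · exfalso
              rw [h, hy] at hx
              omega
            · exfalso
              have hcm := χm_mono hi2 b2 b3 b4 b5 a2 a3 a4 a5 h
              rw [hx, hy] at hcm
              omega
          rw [hy'] at hxy hxyl
          have hjM : ({x, (k:ℤ)+2} : Finset ℤ) ∈ M := ((hNmem _).mp hxy).1
          have hfd : wordOf M (k+2) = false := wordOf_eq_false_iff.mpr
            ⟨x, hx0, by rw [hkc2]; exact hxyl, by rw [hkc2]; exact hjM⟩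
          rw [hword (k+2) (by omega) (by omega), hc] at hfd
          exact Bool.noConfusion hfd
    have hMfin := huniq' (((M.erase ({(i:ℤ)-1, (i:ℤ)} : Finset ℤ)).erase
        ({-(i:ℤ), -((i:ℤ)-1)} : Finset ℤ)).image (fun B => B.image (χm i))) ⟨hM'', hword''⟩
    have himgN : (((M.erase ({(i:ℤ)-1, (i:ℤ)} : Finset ℤ)).erase
        ({-(i:ℤ), -((i:ℤ)-1)} : Finset ℤ)).image (fun B => B.image (χm i))).image
        (fun B => B.image (ψm i)) = (M.erase ({(i:ℤ)-1, (i:ℤ)} : Finset ℤ)).erase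
        ({-(i:ℤ), -((i:ℤ)-1)} : Finset ℤ) := by
      rw [Finset.image_image]
      have hcongr : ∀ B ∈ (M.erase ({(i:ℤ)-1, (i:ℤ)} : Finset ℤ)).erase
          ({-(i:ℤ), -((i:ℤ)-1)} : Finset ℤ),
          ((fun B => B.image (ψm i)) ∘ (fun B => B.image (χm i))) B = id B := by
        intro B hB
        simp only [Function.comp, id]
        rw [Finset.image_image]
        have hpt : ∀ x ∈ B, (ψm i ∘ χm i) x = id x := by
          intro x hx
          obtain ⟨a1, a2, a3, a4, a5⟩ := hSub x (block_subset hN hB hx)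
          exact ψm_χm hi2 a1 a2 a3 a4 a5
        rw [Finset.image_congr hpt, Finset.image_id]
      rw [Finset.image_congr hcongr, Finset.image_id]
    have hrecon : M = ((M.erase ({(i:ℤ)-1, (i:ℤ)} : Finset ℤ)).erase
        ({-(i:ℤ), -((i:ℤ)-1)} : Finset ℤ)) ∪
        {({(i:ℤ)-1, (i:ℤ)} : Finset ℤ), ({-(i:ℤ), -((i:ℤ)-1)} : Finset ℤ)} := by
      ext C
      simp only [Finset.mem_union, Finset.mem_erase, Finset.mem_insert, Finset.mem_singleton]
      constructor
      · intro hC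
        rcases eq_or_ne C ({(i:ℤ)-1, (i:ℤ)} : Finset ℤ) with h | h
        · exact Or.inr (Or.inl h)
        rcases eq_or_ne C ({-(i:ℤ), -((i:ℤ)-1)} : Finset ℤ) with h2 | h2
        · exact Or.inr (Or.inr h2)
        · exact Or.inl ⟨h2, h, hC⟩
      · rintro (⟨_, _, h⟩ | h | h)
        · exact h
        · rw [h]; exact hB1M
        · rw [h]; exact hB2M
    calc M = ((M.erase ({(i:ℤ)-1, (i:ℤ)} : Finset ℤ)).erase
          ({-(i:ℤ), -((i:ℤ)-1)} : Finset ℤ)) ∪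
          {({(i:ℤ)-1, (i:ℤ)} : Finset ℤ), ({-(i:ℤ), -((i:ℤ)-1)} : Finset ℤ)} := hrecon
      _ = ((((M.erase ({(i:ℤ)-1, (i:ℤ)} : Finset ℤ)).erase
          ({-(i:ℤ), -((i:ℤ)-1)} : Finset ℤ)).image (fun B => B.image (χm i))).image
          (fun B => B.image (ψm i))) ∪
          {({(i:ℤ)-1, (i:ℤ)} : Finset ℤ), ({-(i:ℤ), -((i:ℤ)-1)} : Finset ℤ)} := by
          rw [himgN]
      _ = M'.image (fun B => B.image (ψm i)) ∪
          {({(i:ℤ)-1, (i:ℤ)} : Finset ℤ), ({-(i:ℤ), -((i:ℤ)-1)} : Finset ℤ)} := by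
          rw [hMfin]

end NCSP

lemma isNCSP_iff {n : ℕ} {M : Finset (Finset ℤ)} : IsNCSP n M ↔ NCSPgen (pmSet n) M :=
  Iff.rfl

lemma wordOf_zero {M : Finset (Finset ℤ)} : wordOf M 0 = true := by
  rw [wordOf_eq_true_iff]
  intro j h1 h2 _
  simp only [Nat.cast_zero] at h2
  omega

lemma extW_eval {n : ℕ} (f : Fin n → Bool) (j : Fin n) : extW n f (j.1+1) = f j := by
  unfold extW
  rw [dif_pos ⟨by omega, Nat.succ_le_of_lt j.2⟩]
  congr 1

lemma extW_eq_wordOf {n : ℕ} {M : Finset (Finset ℤ)} (hM : NCSPgen (pmSet n) M) :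
    extW n (fun j : Fin n => wordOf M (j.1+1)) = wordOf M := by
  funext k
  by_cases h : 1 ≤ k ∧ k ≤ n
  · have : k - 1 + 1 = k := by omega
    unfold extW
    rw [dif_pos h]
    simp only
    rw [this]
  · unfold extW
    rw [dif_neg h]
    rcases Nat.eq_zero_or_pos k with h0 | h0
    · rw [h0, wordOf_zero]
    · rw [NCSP.wordOf_true_of_gt hM (by omega)]

/-- The number of noncrossing symmetric perfect matchings on `{±1, ..., ±n}` is the
central binomial coefficient `C(n, ⌊n/2⌋)`. -/
theorem card_NCSP (n : ℕ) :
    Set.ncard {M : Finset (Finset ℤ) | IsNCSP n M} = Nat.choose n (n / 2) := by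
  classical
  -- the chosen matching for each ballot word
  set BF : Finset (Fin n → Bool) :=
    (Finset.univ : Finset (Fin n → Bool)).filter (fun f => BallotW n (extW n f)) with hBF
  have hkey : ∀ f ∈ BF, ∃! M : Finset (Finset ℤ), NCSPgen (pmSet n) M ∧
      ∀ k : ℕ, 1 ≤ k → k ≤ n → wordOf M k = extW n f k := by
    intro f hf
    rw [hBF, Finset.mem_filter] at hf
    exact NCSP.key_theorem n (extW n f) hf.2
  set theM : (Fin n → Bool) → Finset (Finset ℤ) := fun f =>
    if h : BallotW n (extW n f) then (NCSP.key_theorem n (extW n f) h).exists.choose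
    else ∅ with htheM
  have hspec : ∀ f, (h : BallotW n (extW n f)) → NCSPgen (pmSet n) (theM f) ∧
      ∀ k : ℕ, 1 ≤ k → k ≤ n → wordOf (theM f) k = extW n f k := by
    intro f h
    rw [htheM]
    simp only [dif_pos h]
    exact (NCSP.key_theorem n (extW n f) h).exists.choose_spec
  have huniq : ∀ f, (h : BallotW n (extW n f)) → ∀ M : Finset (Finset ℤ),
      NCSPgen (pmSet n) M → (∀ k : ℕ, 1 ≤ k → k ≤ n → wordOf M k = extW n f k) →
      M = theM f := by
    intro f h M h1 h2
    obtain ⟨hs1, hs2⟩ := hspec f h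
    exact ExistsUnique.unique (NCSP.key_theorem n (extW n f) h) ⟨h1, h2⟩ ⟨hs1, hs2⟩
  have hset : {M : Finset (Finset ℤ) | IsNCSP n M} = ↑(BF.image theM) := by
    ext M
    simp only [Set.mem_setOf_eq, Finset.coe_image, Set.mem_image, Finset.mem_coe]
    constructor
    · intro hM
      rw [isNCSP_iff] at hM
      refine ⟨fun j : Fin n => wordOf M (j.1+1), ?_, ?_⟩
      · rw [hBF, Finset.mem_filter]
        refine ⟨Finset.mem_univ _, ?_⟩
        rw [extW_eq_wordOf hM]
        exact NCSP.ballot_wordOf hM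
      · have hb : BallotW n (extW n (fun j : Fin n => wordOf M (j.1+1))) := by
          rw [extW_eq_wordOf hM]
          exact NCSP.ballot_wordOf hM
        refine (huniq _ hb M hM ?_).symm
        intro k h1 h2
        rw [extW_eq_wordOf hM]
    · rintro ⟨f, hf, rfl⟩
      rw [hBF, Finset.mem_filter] at hf
      rw [isNCSP_iff]
      exact (hspec f hf.2).1
  rw [hset, Set.ncard_coe_finset]
  have hinj : Set.InjOn theM ↑BF := by
    intro f1 hf1 f2 hf2 heq
    simp only [Finset.mem_coe, hBF, Finset.mem_filter] at hf1 hf2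
    have hs1 := hspec f1 hf1.2
    have hs2 := hspec f2 hf2.2
    funext j
    have e1 := hs1.2 (j.1+1) (by omega) (Nat.succ_le_of_lt j.2)
    have e2 := hs2.2 (j.1+1) (by omega) (Nat.succ_le_of_lt j.2)
    rw [extW_eval f1 j] at e1
    rw [extW_eval f2 j] at e2
    rw [heq] at e1
    rw [e2] at e1
    exact e1.symm
  rw [Finset.card_image_of_injOn hinj]
  have : BF.card = B n := rfl
  rw [this, B_eq_choose]
end

section
/- Let G be a finite bipartite directed graph with vertex bipartition V = V⁻ ⊔ V⁺ such that every interior vertex (neither a source nor a sink) in V⁺ has indegree equal to outdegree. Let f : V → A be a function to an abelian group such that for every v ∈ V⁻, the sum of f over out-neighbors of v minus the sum of f over in-neighbors of v is zero, and also f(v) = 0. Then the sum over sinks u of deg(u)·f(u) equals the sum over sources u of deg(u)·f(u), where deg is total degree. -/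
/-- The indegree of a vertex of a directed multigraph with edge set `E`,
source map `src` and target map `tgt`. -/
def inDeg {V E : Type*} [Fintype E] [DecidableEq V] (tgt : E → V) (v : V) : ℕ :=
  (Finset.univ.filter fun e => tgt e = v).card

/-- The outdegree of a vertex of a directed multigraph. -/
def outDeg {V E : Type*} [Fintype E] [DecidableEq V] (src : E → V) (v : V) : ℕ :=
  (Finset.univ.filter fun e => src e = v).card

open Finset

private lemma fiber_split {V E A : Type*} [Fintype E] [DecidableEq V] [Fintype V]
    [AddCommMonoid A] (p : V → Prop) [DecidablePred p] (g : E → V) (h : E → A) :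
    ∑ e ∈ Finset.univ.filter (fun e => p (g e)), h e
      = ∑ v ∈ Finset.univ.filter p, ∑ e ∈ Finset.univ.filter (fun e => g e = v), h e := by
  rw [← Finset.sum_fiberwise_of_maps_to (g := g) (t := Finset.univ.filter p)
      (fun e he => by simp only [mem_filter, mem_univ, true_and] at he ⊢; exact he)]
  refine Finset.sum_congr rfl fun v hv => Finset.sum_congr ?_ fun _ _ => rfl
  simp only [mem_filter, mem_univ, true_and] at hv
  ext e
  simp only [mem_filter, mem_univ, true_and]
  constructor
  · rintro ⟨_, h2⟩; exact h2
  · rintro rfl; exact ⟨hv, rfl⟩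

private lemma deg_sum {V E A : Type*} [Fintype E] [DecidableEq V] [Fintype V]
    [AddCommMonoid A] (p : V → Prop) [DecidablePred p] (g : E → V) (f : V → A) :
    ∑ v ∈ Finset.univ.filter p, (Finset.univ.filter fun e => g e = v).card • f v
      = ∑ e ∈ Finset.univ.filter (fun e => p (g e)), f (g e) := by
  rw [fiber_split p g (fun e => f (g e))]
  refine Finset.sum_congr rfl fun v hv => ?_
  rw [← Finset.sum_const]
  refine Finset.sum_congr rfl fun e he => ?_
  simp only [mem_filter] at he
  rw [he.2]

/-- Let `G` be a finite bipartite directed (multi)graph with vertex bipartition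
`V = V⁻ ⊔ V⁺` (here `Vm v` means `v ∈ V⁻`), such that every interior vertex of `V⁺`
(one with positive indegree and positive outdegree) has indegree equal to outdegree.
Let `f : V → A` be a function to an abelian group such that for every `v ∈ V⁻` the sum
of `f` over out-neighbors of `v` minus the sum over in-neighbors of `v` vanishes, and
`f v = 0`.  Then `∑_{sinks u} deg(u) • f(u) = ∑_{sources u} deg(u) • f(u)`,
where `deg` is indegree plus outdegree. -/
theorem transition_graph_sum {V E A : Type*} [Fintype V] [Fintype E] [DecidableEq V]
    [AddCommGroup A] (src tgt : E → V) (Vm : V → Prop)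
    (hbip : ∀ e : E, Vm (src e) ↔ ¬ Vm (tgt e))
    (hplus : ∀ v : V, ¬ Vm v → 0 < inDeg tgt v → 0 < outDeg src v →
      inDeg tgt v = outDeg src v)
    (f : V → A)
    (hminus : ∀ v : V, Vm v →
      (∑ e ∈ Finset.univ.filter fun e => src e = v, f (tgt e))
          - (∑ e ∈ Finset.univ.filter fun e => tgt e = v, f (src e)) = 0
        ∧ f v = 0) :
    ∑ v ∈ Finset.univ.filter fun v => outDeg src v = 0,
        (inDeg tgt v + outDeg src v) • f v
      = ∑ v ∈ Finset.univ.filter fun v => inDeg tgt v = 0,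
          (inDeg tgt v + outDeg src v) • f v := by
  classical
  -- the two edge sums
  set S1 := ∑ e ∈ Finset.univ.filter (fun e => Vm (src e)), f (tgt e) with hS1
  set S2 := ∑ e ∈ Finset.univ.filter (fun e => Vm (tgt e)), f (src e) with hS2
  have key : S1 = S2 := by
    rw [hS1, hS2, fiber_split Vm src (fun e => f (tgt e)),
      fiber_split Vm tgt (fun e => f (src e)), ← sub_eq_zero, ← Finset.sum_sub_distrib]
    refine Finset.sum_eq_zero fun v hv => ?_
    simp only [mem_filter, mem_univ, true_and] at hv
    exact (hminus v hv).1
  -- vertex sums over V⁺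
  have hT1 : ∑ v ∈ Finset.univ.filter (fun v => ¬ Vm v), inDeg tgt v • f v = S1 := by
    simp only [inDeg]
    rw [hS1, deg_sum (fun v => ¬ Vm v) tgt f]
    refine Finset.sum_congr ?_ fun _ _ => rfl
    refine Finset.filter_congr fun e _ => ?_
    simp [hbip e]
  have hT2 : ∑ v ∈ Finset.univ.filter (fun v => ¬ Vm v), outDeg src v • f v = S2 := by
    simp only [outDeg]
    rw [hS2, deg_sum (fun v => ¬ Vm v) src f]
    refine Finset.sum_congr ?_ fun _ _ => rfl
    refine Finset.filter_congr fun e _ => ?_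
    simp [hbip e]
  rw [← hT1, ← hT2] at key
  rw [← sub_eq_zero, ← sub_eq_zero.mpr key]
  rw [Finset.sum_filter, Finset.sum_filter, Finset.sum_filter, Finset.sum_filter,
    ← Finset.sum_sub_distrib, ← Finset.sum_sub_distrib]
  refine Finset.sum_congr rfl fun v _ => ?_
  by_cases hv : Vm v
  · have hf : f v = 0 := (hminus v hv).2
    simp [hf, hv]
  · simp only [hv, not_false_iff, if_true]
    by_cases ho : outDeg src v = 0 <;> by_cases hi : inDeg tgt v = 0
    · simp [ho, hi]
    · simp [ho, hi]
    · rw [if_neg ho, if_pos hi, hi]; simp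
    · rw [if_neg ho, if_neg hi,
        hplus v hv (Nat.pos_of_ne_zero hi) (Nat.pos_of_ne_zero ho)]
      simp
end

section
/- Let w ∈ C_n with w_1 > 0 and let 2 ≤ j ≤ n. Then ℓ(w·s_{1j}) = ℓ(w) - 1 if and only if w_1 < -w_j and no e ∈ {w_2,...,w_{j-1}} satisfies w_j < e < -w_1. -/
/-- The negation map on `{-n, ..., n}`, fixing integers of larger absolute value. -/
def negAbs (n : ℕ) : ℤ → ℤ := fun z => if z.natAbs ≤ n then -z else z

lemma negAbs_involutive (n : ℕ) : Function.Involutive (negAbs n) := by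
  intro z
  unfold negAbs
  by_cases h : z.natAbs ≤ n
  · simp [h, Int.natAbs_neg]
  · simp [h]

/-- The longest element `w_n^C` of the signed permutation group `C_n`:
the map `i ↦ -i` on `{±1, ..., ±n}`. -/
def wC (n : ℕ) : Equiv.Perm ℤ := (negAbs_involutive n).toPerm

/-- The simple generators `t_0, t_1, ..., t_{n-1}` of `C_n`. -/
def tgen (n : ℕ) (i : Fin n) : Equiv.Perm ℤ :=
  if i.val = 0 then Equiv.swap (-1) 1
  else Equiv.swap (i : ℤ) ((i : ℤ) + 1) * Equiv.swap (-(i : ℤ) - 1) (-(i : ℤ))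

/-- Coxeter length on `C_n`. -/
noncomputable def clen (n : ℕ) (w : Equiv.Perm ℤ) : ℕ :=
  sInf {k | ∃ l : List (Fin n), (l.map (tgen n)).prod = w ∧ l.length = k}

/-- The Demazure (0-Hecke) product of a word in the simple generators of `C_n`. -/
noncomputable def hecke (n : ℕ) (l : List (Fin n)) : Equiv.Perm ℤ :=
  l.foldl (fun w i => if clen n (w * tgen n i) = clen n w + 1 then w * tgen n i else w) 1

/-- `a` is an involution word for the involution `y ∈ C_n`. -/
noncomputable def IsInvWordC (n : ℕ) (y : Equiv.Perm ℤ) (a : List (Fin n)) : Prop :=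
  hecke n (a.reverse ++ a) = y ∧
  ∀ b : List (Fin n), hecke n (b.reverse ++ b) = y → a.length ≤ b.length

/-- `a` is a reduced word for `w ∈ C_n`. -/
def IsRedWordC (n : ℕ) (w : Equiv.Perm ℤ) (a : List (Fin n)) : Prop :=
  (a.map (tgen n)).prod = w ∧
  ∀ b : List (Fin n), (b.map (tgen n)).prod = w → a.length ≤ b.length

/-- `w` is an atom of the involution `y ∈ C_n`. -/
noncomputable def IsAtomOf (n : ℕ) (y w : Equiv.Perm ℤ) : Prop :=
  ∃ a : List (Fin n), IsInvWordC n y a ∧ (a.map (tgen n)).prod = w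

namespace DescentAux


def fB (w : Equiv.Perm ℤ) (p : ℤ × ℤ) : ℕ :=
  (if p.1 < p.2 ∧ w p.2 < w p.1 then 1 else 0) +
  (if p.1 ≤ p.2 ∧ w p.1 + w p.2 < 0 then 1 else 0)

noncomputable def LB (n : ℕ) (w : Equiv.Perm ℤ) : ℕ :=
  ∑ p ∈ (Finset.Icc (1:ℤ) (n:ℤ)) ×ˢ (Finset.Icc (1:ℤ) (n:ℤ)), fB w p

lemma fB_lt (u : Equiv.Perm ℤ) {x y : ℤ} (h : x < y) :
    fB u (x, y) = (if u y < u x then 1 else 0) + (if u y < -(u x) then 1 else 0) := by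
  simp only [fB, h, h.le, true_and]
  congr 1
  simp only [show (u x + u y < 0) ↔ (u y < -(u x)) from by omega]

lemma fB_gt (u : Equiv.Perm ℤ) {x y : ℤ} (h : y < x) : fB u (x, y) = 0 := by
  simp [fB, h.not_gt, h.not_ge]

lemma fB_diag (u : Equiv.Perm ℤ) (x : ℤ) :
    fB u (x, x) = if u x < 0 then 1 else 0 := by
  simp only [fB, lt_irrefl, false_and, if_false, le_refl, true_and, zero_add]
  simp only [show (u x + u x < 0) ↔ (u x < 0) from by omega]

lemma sum_helper_one {S : Finset (ℤ × ℤ)} {g f : ℤ × ℤ → ℕ} {p : ℤ × ℤ} (hp : p ∈ S)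
    (hc : ∀ r ∈ S, r ≠ p → g r = f r) (h : g p = f p + 1) :
    ∑ r ∈ S, g r = (∑ r ∈ S, f r) + 1 := by
  rw [← Finset.add_sum_erase S g hp, ← Finset.add_sum_erase S f hp, h,
    (Finset.sum_congr rfl (fun r hr => hc r (Finset.mem_of_mem_erase hr) (Finset.ne_of_mem_erase hr)) :
      ∑ r ∈ S.erase p, g r = ∑ r ∈ S.erase p, f r)]
  ring

lemma sum_helper_one_le {S : Finset (ℤ × ℤ)} {g f : ℤ × ℤ → ℕ} {p : ℤ × ℤ} (hp : p ∈ S)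
    (hc : ∀ r ∈ S, r ≠ p → g r = f r) (h : g p ≤ f p + 1) :
    ∑ r ∈ S, g r ≤ (∑ r ∈ S, f r) + 1 := by
  rw [← Finset.add_sum_erase S g hp, ← Finset.add_sum_erase S f hp,
    (Finset.sum_congr rfl (fun r hr => hc r (Finset.mem_of_mem_erase hr) (Finset.ne_of_mem_erase hr)) :
      ∑ r ∈ S.erase p, g r = ∑ r ∈ S.erase p, f r)]
  omega

lemma sum_helper_two {S : Finset (ℤ × ℤ)} {g f : ℤ × ℤ → ℕ} {p q : ℤ × ℤ} (hp : p ∈ S)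
    (hq : q ∈ S) (hpq : p ≠ q)
    (hc : ∀ r ∈ S, r ≠ p → r ≠ q → g r = f r) (h : g p + g q = f p + f q + 1) :
    ∑ r ∈ S, g r = (∑ r ∈ S, f r) + 1 := by
  have hq' : q ∈ S.erase p := Finset.mem_erase.2 ⟨fun hh => hpq hh.symm, hq⟩
  rw [← Finset.add_sum_erase S g hp, ← Finset.add_sum_erase S f hp,
    ← Finset.add_sum_erase _ g hq', ← Finset.add_sum_erase _ f hq',
    (Finset.sum_congr rfl (fun r hr => hc r
      (Finset.mem_of_mem_erase (Finset.mem_of_mem_erase hr))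
      (Finset.ne_of_mem_erase (Finset.mem_of_mem_erase hr))
      (Finset.ne_of_mem_erase hr)) :
      ∑ r ∈ (S.erase p).erase q, g r = ∑ r ∈ (S.erase p).erase q, f r)]
  omega

lemma sum_helper_two_le {S : Finset (ℤ × ℤ)} {g f : ℤ × ℤ → ℕ} {p q : ℤ × ℤ} (hp : p ∈ S)
    (hq : q ∈ S) (hpq : p ≠ q)
    (hc : ∀ r ∈ S, r ≠ p → r ≠ q → g r = f r) (h : g p + g q ≤ f p + f q + 1) :
    ∑ r ∈ S, g r ≤ (∑ r ∈ S, f r) + 1 := by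
  have hq' : q ∈ S.erase p := Finset.mem_erase.2 ⟨fun hh => hpq hh.symm, hq⟩
  rw [← Finset.add_sum_erase S g hp, ← Finset.add_sum_erase S f hp,
    ← Finset.add_sum_erase _ g hq', ← Finset.add_sum_erase _ f hq',
    (Finset.sum_congr rfl (fun r hr => hc r
      (Finset.mem_of_mem_erase (Finset.mem_of_mem_erase hr))
      (Finset.ne_of_mem_erase (Finset.mem_of_mem_erase hr))
      (Finset.ne_of_mem_erase hr)) :
      ∑ r ∈ (S.erase p).erase q, g r = ∑ r ∈ (S.erase p).erase q, f r)]
  omega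

lemma tgen0_apply (n : ℕ) (i : Fin n) (h : i.val = 0) (x : ℤ) :
    tgen n i x = if x = -1 then 1 else if x = 1 then -1 else x := by
  simp [tgen, h, Equiv.swap_apply_def]

lemma tgenm_apply (n : ℕ) (i : Fin n) (h : 1 ≤ i.val) (x : ℤ) :
    tgen n i x = if x = (i : ℤ) then (i : ℤ) + 1 else if x = (i : ℤ) + 1 then (i : ℤ)
      else if x = -(i : ℤ) then -(i : ℤ) - 1 else if x = -(i : ℤ) - 1 then -(i : ℤ) else x := by
  have h0 : ¬ (i.val = 0) := by omega
  have h1 : (1 : ℤ) ≤ (i : ℤ) := by exact_mod_cast h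
  simp only [tgen, if_neg h0, Equiv.Perm.mul_apply, Equiv.swap_apply_def]
  split_ifs <;> omega


lemma tgen_neg (n : ℕ) (i : Fin n) (x : ℤ) : tgen n i (-x) = -(tgen n i x) := by
  rcases Nat.eq_zero_or_pos i.val with h | h
  · rw [tgen0_apply n i h, tgen0_apply n i h]
    split_ifs <;> (try exact ‹False›.elim) <;> omega
  · have h1 : (1 : ℤ) ≤ (i : ℤ) := by exact_mod_cast h
    rw [tgenm_apply n i h, tgenm_apply n i h]
    split_ifs <;> (try exact ‹False›.elim) <;> omega

lemma tgen_invol (n : ℕ) (i : Fin n) : tgen n i * tgen n i = 1 := by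
  apply Equiv.ext
  intro x
  simp only [Equiv.Perm.mul_apply, Equiv.Perm.one_apply]
  rcases Nat.eq_zero_or_pos i.val with h | h
  · rw [tgen0_apply n i h x, tgen0_apply n i h]
    split_ifs <;> (try exact ‹False›.elim) <;> omega
  · have h1 : (1 : ℤ) ≤ (i : ℤ) := by exact_mod_cast h
    rw [tgenm_apply n i h x, tgenm_apply n i h]
    split_ifs <;> (try exact ‹False›.elim) <;> omega

lemma tgen_fix (n : ℕ) (i : Fin n) (x : ℤ) (hx : (n : ℤ) < |x|) : tgen n i x = x := by
  have hin : (i : ℤ) < (n : ℤ) := by exact_mod_cast i.isLt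
  have hx' : (n : ℤ) < x ∨ (n : ℤ) < -x := lt_abs.mp hx
  have hi0 : (0 : ℤ) ≤ (i : ℤ) := by positivity
  rcases Nat.eq_zero_or_pos i.val with h | h
  · rw [tgen0_apply n i h]
    have : (0:ℤ) ≤ n := by positivity
    split_ifs <;> (try exact ‹False›.elim) <;> omega
  · have h1 : (1 : ℤ) ≤ (i : ℤ) := by exact_mod_cast h
    rw [tgenm_apply n i h]
    split_ifs <;> (try exact ‹False›.elim) <;> omega



lemma LB_mul_t0_eq (n : ℕ) (w : Equiv.Perm ℤ) (hsym : ∀ i : ℤ, w (-i) = -(w i))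
    (i : Fin n) (h : i.val = 0) (hp : 0 < w 1) :
    LB n (w * tgen n i) = LB n w + 1 := by
  have hn : (1 : ℤ) ≤ (n : ℤ) := by exact_mod_cast Nat.one_le_iff_ne_zero.2 (by rintro rfl; exact i.elim0)
  set v := w * tgen n i with hv
  have hv1 : v 1 = -(w 1) := by
    show w (tgen n i 1) = -(w 1)
    rw [tgen0_apply n i h]
    norm_num
    rw [← hsym 1]
  have hvk : ∀ x : ℤ, x ≠ 1 → x ≠ -1 → v x = w x := by
    intro x hx1 hx2
    show w (tgen n i x) = w x
    rw [tgen0_apply n i h, if_neg hx2, if_neg hx1]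
  have hmem : ((1:ℤ), (1:ℤ)) ∈ (Finset.Icc (1:ℤ) (n:ℤ)) ×ˢ (Finset.Icc (1:ℤ) (n:ℤ)) := by
    simp [Finset.mem_Icc]; omega
  refine sum_helper_one hmem ?_ ?_
  · rintro ⟨x, y⟩ hr hne
    simp only [Finset.mem_product, Finset.mem_Icc] at hr
    rcases eq_or_ne x 1 with rfl | hx1
    · rcases eq_or_ne y 1 with rfl | hy1
      · exact absurd rfl hne
      · have hy : (1:ℤ) < y := lt_of_le_of_ne hr.2.1 (Ne.symm hy1)
        rw [fB_lt v hy, fB_lt w hy, hv1, hvk y (by omega) (by omega)]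
        split_ifs <;> (try exact ‹False›.elim) <;> omega
    · rcases eq_or_ne y 1 with rfl | hy1
      · have hx : (1:ℤ) < x := lt_of_le_of_ne hr.1.1 (Ne.symm hx1)
        rw [fB_gt v hx, fB_gt w hx]
      · simp only [fB]
        rw [hvk x hx1 (by omega), hvk y hy1 (by omega)]
  · rw [fB_diag, fB_diag, hv1]
    split_ifs <;> (try exact ‹False›.elim) <;> omega

lemma LB_mul_t0_le (n : ℕ) (w : Equiv.Perm ℤ) (hsym : ∀ i : ℤ, w (-i) = -(w i))
    (i : Fin n) (h : i.val = 0) :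
    LB n (w * tgen n i) ≤ LB n w + 1 := by
  have hn : (1 : ℤ) ≤ (n : ℤ) := by exact_mod_cast Nat.one_le_iff_ne_zero.2 (by rintro rfl; exact i.elim0)
  set v := w * tgen n i with hv
  have hv1 : v 1 = -(w 1) := by
    show w (tgen n i 1) = -(w 1)
    rw [tgen0_apply n i h]
    norm_num
    rw [← hsym 1]
  have hvk : ∀ x : ℤ, x ≠ 1 → x ≠ -1 → v x = w x := by
    intro x hx1 hx2
    show w (tgen n i x) = w x
    rw [tgen0_apply n i h, if_neg hx2, if_neg hx1]
  have hmem : ((1:ℤ), (1:ℤ)) ∈ (Finset.Icc (1:ℤ) (n:ℤ)) ×ˢ (Finset.Icc (1:ℤ) (n:ℤ)) := by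
    simp [Finset.mem_Icc]; omega
  refine sum_helper_one_le hmem ?_ ?_
  · rintro ⟨x, y⟩ hr hne
    simp only [Finset.mem_product, Finset.mem_Icc] at hr
    rcases eq_or_ne x 1 with rfl | hx1
    · rcases eq_or_ne y 1 with rfl | hy1
      · exact absurd rfl hne
      · have hy : (1:ℤ) < y := lt_of_le_of_ne hr.2.1 (Ne.symm hy1)
        rw [fB_lt v hy, fB_lt w hy, hv1, hvk y (by omega) (by omega)]
        split_ifs <;> (try exact ‹False›.elim) <;> omega
    · rcases eq_or_ne y 1 with rfl | hy1
      · have hx : (1:ℤ) < x := lt_of_le_of_ne hr.1.1 (Ne.symm hx1)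
        rw [fB_gt v hx, fB_gt w hx]
      · simp only [fB]
        rw [hvk x hx1 (by omega), hvk y hy1 (by omega)]
  · rw [fB_diag, fB_diag, hv1]
    split_ifs <;> (try exact ‹False›.elim) <;> omega


def swF (m : ℤ) : ℤ → ℤ := fun x => if x = m then m + 1 else if x = m + 1 then m else x

lemma swF_swF (m x : ℤ) : swF m (swF m x) = x := by
  simp only [swF]
  split_ifs <;> (try exact ‹False›.elim) <;> omega

lemma LB_reindex (n : ℕ) (m : ℤ) (hm1 : 1 ≤ m) (hmn : m + 1 ≤ (n : ℤ)) (u : Equiv.Perm ℤ) :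
    LB n u = ∑ p ∈ (Finset.Icc (1:ℤ) (n:ℤ)) ×ˢ (Finset.Icc (1:ℤ) (n:ℤ)),
      fB u (swF m p.1, swF m p.2) := by
  refine Finset.sum_nbij' (fun p => (swF m p.1, swF m p.2)) (fun p => (swF m p.1, swF m p.2))
    ?_ ?_ ?_ ?_ ?_
  · rintro ⟨x, y⟩ hr
    simp only [Finset.mem_product, Finset.mem_Icc] at hr ⊢
    simp only [swF]
    split_ifs <;> omega
  · rintro ⟨x, y⟩ hr
    simp only [Finset.mem_product, Finset.mem_Icc] at hr ⊢
    simp only [swF]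
    split_ifs <;> omega
  · rintro ⟨x, y⟩ _
    simp only [swF_swF]
  · rintro ⟨x, y⟩ _
    simp only [swF_swF]
  · rintro ⟨x, y⟩ _
    simp only [swF_swF]

lemma LB_mul_tm_eq (n : ℕ) (w : Equiv.Perm ℤ) (i : Fin n) (h : 1 ≤ i.val)
    (hasc : w ((i : ℤ)) < w ((i : ℤ) + 1)) :
    LB n (w * tgen n i) = LB n w + 1 := by
  have hm1' : (1:ℤ) ≤ (i : ℤ) := by exact_mod_cast h
  have hmn' : (i : ℤ) + 1 ≤ (n : ℤ) := by exact_mod_cast i.isLt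
  set m : ℤ := (i : ℤ) with hmdef
  have hm1 : (1:ℤ) ≤ m := hm1'
  have hmn : m + 1 ≤ (n : ℤ) := hmn'
  set v := w * tgen n i with hv
  have hts : ∀ x : ℤ, 1 ≤ x → v (swF m x) = w x := by
    intro x hx
    show w (tgen n i (swF m x)) = w x
    congr 1
    rw [tgenm_apply n i h]
    simp only [swF]
    split_ifs <;> (try exact ‹False›.elim) <;> omega
  have key : LB n v = ∑ p ∈ (Finset.Icc (1:ℤ) (n:ℤ)) ×ˢ (Finset.Icc (1:ℤ) (n:ℤ)),
      fB v (swF m p.1, swF m p.2) := LB_reindex n m hm1 hmn v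
  rw [key]
  have hp1 : ((m, m+1) : ℤ × ℤ) ∈ (Finset.Icc (1:ℤ) (n:ℤ)) ×ˢ (Finset.Icc (1:ℤ) (n:ℤ)) := by
    simp [Finset.mem_Icc]; omega
  have hp2 : ((m+1, m) : ℤ × ℤ) ∈ (Finset.Icc (1:ℤ) (n:ℤ)) ×ˢ (Finset.Icc (1:ℤ) (n:ℤ)) := by
    simp [Finset.mem_Icc]; omega
  refine sum_helper_two hp1 hp2 (by intro hh; rw [Prod.mk.injEq] at hh; omega) ?_ ?_
  · rintro ⟨x, y⟩ hr hne1 hne2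
    simp only [Finset.mem_product, Finset.mem_Icc] at hr
    have hx1 : (1:ℤ) ≤ x := hr.1.1
    have hy1 : (1:ℤ) ≤ y := hr.2.1
    have hne1' : ¬ (x = m ∧ y = m + 1) := by
      intro hh; exact hne1 (by simp [hh.1, hh.2])
    have hne2' : ¬ (x = m + 1 ∧ y = m) := by
      intro hh; exact hne2 (by simp [hh.1, hh.2])
    have e1 : (swF m x < swF m y) ↔ x < y := by
      simp only [swF]; split_ifs <;> omega
    have e2 : (swF m x ≤ swF m y) ↔ x ≤ y := by
      simp only [swF]; split_ifs <;> omega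
    simp only [fB, hts x hx1, hts y hy1, e1, e2]
  · have hvm : v (swF m m) = w m := hts m hm1
    have hvm1 : v (swF m (m+1)) = w (m+1) := hts (m+1) (by omega)
    have hsw1 : swF m m = m + 1 := by simp [swF]
    have hsw2 : swF m (m+1) = m := by simp only [swF]; split_ifs <;> omega
    rw [hsw1] at hvm
    rw [hsw2] at hvm1
    show fB v (swF m m, swF m (m+1)) + fB v (swF m (m+1), swF m m)
      = fB w (m, m+1) + fB w (m+1, m) + 1
    rw [hsw1, hsw2, fB_gt v (by omega : m < m+1), fB_lt v (by omega : m < m+1),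
      fB_lt w (by omega : m < m+1), fB_gt w (by omega : m < m+1), hvm, hvm1]
    split_ifs <;> (try exact ‹False›.elim) <;> omega

lemma LB_mul_tm_le (n : ℕ) (w : Equiv.Perm ℤ) (i : Fin n) (h : 1 ≤ i.val) :
    LB n (w * tgen n i) ≤ LB n w + 1 := by
  have hm1' : (1:ℤ) ≤ (i : ℤ) := by exact_mod_cast h
  have hmn' : (i : ℤ) + 1 ≤ (n : ℤ) := by exact_mod_cast i.isLt
  set m : ℤ := (i : ℤ) with hmdef
  have hm1 : (1:ℤ) ≤ m := hm1'
  have hmn : m + 1 ≤ (n : ℤ) := hmn'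
  set v := w * tgen n i with hv
  have hts : ∀ x : ℤ, 1 ≤ x → v (swF m x) = w x := by
    intro x hx
    show w (tgen n i (swF m x)) = w x
    congr 1
    rw [tgenm_apply n i h]
    simp only [swF]
    split_ifs <;> (try exact ‹False›.elim) <;> omega
  have key : LB n v = ∑ p ∈ (Finset.Icc (1:ℤ) (n:ℤ)) ×ˢ (Finset.Icc (1:ℤ) (n:ℤ)),
      fB v (swF m p.1, swF m p.2) := LB_reindex n m hm1 hmn v
  rw [key]
  have hp1 : ((m, m+1) : ℤ × ℤ) ∈ (Finset.Icc (1:ℤ) (n:ℤ)) ×ˢ (Finset.Icc (1:ℤ) (n:ℤ)) := by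
    simp [Finset.mem_Icc]; omega
  have hp2 : ((m+1, m) : ℤ × ℤ) ∈ (Finset.Icc (1:ℤ) (n:ℤ)) ×ˢ (Finset.Icc (1:ℤ) (n:ℤ)) := by
    simp [Finset.mem_Icc]; omega
  refine sum_helper_two_le hp1 hp2 (by intro hh; rw [Prod.mk.injEq] at hh; omega) ?_ ?_
  · rintro ⟨x, y⟩ hr hne1 hne2
    simp only [Finset.mem_product, Finset.mem_Icc] at hr
    have hx1 : (1:ℤ) ≤ x := hr.1.1
    have hy1 : (1:ℤ) ≤ y := hr.2.1
    have hne1' : ¬ (x = m ∧ y = m + 1) := by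
      intro hh; exact hne1 (by simp [hh.1, hh.2])
    have hne2' : ¬ (x = m + 1 ∧ y = m) := by
      intro hh; exact hne2 (by simp [hh.1, hh.2])
    have e1 : (swF m x < swF m y) ↔ x < y := by
      simp only [swF]; split_ifs <;> omega
    have e2 : (swF m x ≤ swF m y) ↔ x ≤ y := by
      simp only [swF]; split_ifs <;> omega
    simp only [fB, hts x hx1, hts y hy1, e1, e2]
  · have hvm : v (swF m m) = w m := hts m hm1
    have hvm1 : v (swF m (m+1)) = w (m+1) := hts (m+1) (by omega)
    have hsw1 : swF m m = m + 1 := by simp [swF]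
    have hsw2 : swF m (m+1) = m := by simp only [swF]; split_ifs <;> omega
    rw [hsw1] at hvm
    rw [hsw2] at hvm1
    show fB v (swF m m, swF m (m+1)) + fB v (swF m (m+1), swF m m)
      ≤ fB w (m, m+1) + fB w (m+1, m) + 1
    rw [hsw1, hsw2, fB_gt v (by omega : m < m+1), fB_lt v (by omega : m < m+1),
      fB_lt w (by omega : m < m+1), fB_gt w (by omega : m < m+1), hvm, hvm1]
    split_ifs <;> (try exact ‹False›.elim) <;> omega

lemma LB_mul_desc_t0 (n : ℕ) (w : Equiv.Perm ℤ) (hsym : ∀ i : ℤ, w (-i) = -(w i))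
    (i : Fin n) (h : i.val = 0) (hneg : w 1 < 0) :
    LB n (w * tgen n i) + 1 = LB n w := by
  set v := w * tgen n i with hv
  have hvsym : ∀ x : ℤ, v (-x) = -(v x) := by
    intro x
    show w (tgen n i (-x)) = -(w (tgen n i x))
    rw [tgen_neg, hsym]
  have hv1 : v 1 = -(w 1) := by
    show w (tgen n i 1) = -(w 1)
    rw [tgen0_apply n i h]
    norm_num
    rw [← hsym 1]
  have := LB_mul_t0_eq n v hvsym i h (by rw [hv1]; omega)
  have hvv : v * tgen n i = w := by
    rw [hv, mul_assoc, tgen_invol, mul_one]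
  rw [hvv] at this
  omega

lemma LB_mul_desc_tm (n : ℕ) (w : Equiv.Perm ℤ) (i : Fin n) (h : 1 ≤ i.val)
    (hdesc : w ((i : ℤ) + 1) < w ((i : ℤ))) :
    LB n (w * tgen n i) + 1 = LB n w := by
  set v := w * tgen n i with hv
  have hvm : v ((i : ℤ)) = w ((i : ℤ) + 1) := by
    show w (tgen n i ((i : ℤ))) = _
    congr 1
    rw [tgenm_apply n i h]
    simp
  have hvm1 : v ((i : ℤ) + 1) = w ((i : ℤ)) := by
    have hm1 : (1:ℤ) ≤ (i : ℤ) := by exact_mod_cast h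
    show w (tgen n i ((i : ℤ) + 1)) = _
    congr 1
    rw [tgenm_apply n i h]
    split_ifs <;> (try exact ‹False›.elim) <;> omega
  have := LB_mul_tm_eq n v i h (by rw [hvm, hvm1]; exact hdesc)
  have hvv : v * tgen n i = w := by
    rw [hv, mul_assoc, tgen_invol, mul_one]
  rw [hvv] at this
  omega

lemma LB_mul_le (n : ℕ) (w : Equiv.Perm ℤ) (hsym : ∀ i : ℤ, w (-i) = -(w i)) (i : Fin n) :
    LB n (w * tgen n i) ≤ LB n w + 1 := by
  rcases Nat.eq_zero_or_pos i.val with h | h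
  · exact LB_mul_t0_le n w hsym i h
  · exact LB_mul_tm_le n w i h

lemma LB_one (n : ℕ) : LB n 1 = 0 := by
  apply Finset.sum_eq_zero
  rintro ⟨x, y⟩ hr
  simp only [Finset.mem_product, Finset.mem_Icc] at hr
  simp only [fB]
  rw [if_neg (by simp only [Equiv.Perm.one_apply, Equiv.Perm.coe_one, id]; omega),
    if_neg (by simp only [Equiv.Perm.one_apply, Equiv.Perm.coe_one, id]; omega)]
  rfl

lemma w_zero (w : Equiv.Perm ℤ) (hsym : ∀ i : ℤ, w (-i) = -(w i)) : w 0 = 0 := by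
  have := hsym 0
  simp at this
  omega

lemma w_one_ne (w : Equiv.Perm ℤ) (hsym : ∀ i : ℤ, w (-i) = -(w i)) : w 1 ≠ 0 := by
  intro hh
  have h0 := w_zero w hsym
  have := w.injective (hh.trans h0.symm)
  omega

lemma eq_one_of_inc (n : ℕ) (w : Equiv.Perm ℤ)
    (hsym : ∀ i : ℤ, w (-i) = -(w i))
    (hfix : ∀ i : ℤ, (n : ℤ) < |i| → w i = i)
    (h1 : 0 < w 1)
    (hinc : ∀ m : ℤ, 1 ≤ m → m < (n : ℤ) → w m < w (m + 1)) :
    w = 1 := by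
  have hub : ∀ m : ℤ, 1 ≤ m → m ≤ (n : ℤ) → w m ≤ (n : ℤ) := by
    intro m hm1 hmn
    by_contra hh
    push_neg at hh
    have : w (w m) = w m := hfix (w m) (by rw [abs_of_pos (by omega)]; omega)
    have := w.injective this
    omega
  have hlow : ∀ m : ℤ, 1 ≤ m → m ≤ (n : ℤ) → m ≤ w m := by
    refine Int.le_induction (motive := fun m _ => m ≤ (n : ℤ) → m ≤ w m) ?_ ?_
    · intro _; omega
    · intro m hm ih hmn
      have := hinc m hm (by omega)
      have := ih (by omega)
      omega
  have hup : ∀ k : ℕ, ∀ m : ℤ, m = (n : ℤ) - k → 1 ≤ m → w m ≤ m := by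
    intro k
    induction k with
    | zero => intro m hm h1m; have := hub m h1m (by omega); omega
    | succ k ih =>
      intro m hm h1m
      have h2 := ih (m + 1) (by omega) (by omega)
      have := hinc m h1m (by omega)
      omega
  have hid : ∀ m : ℤ, 1 ≤ m → m ≤ (n : ℤ) → w m = m := by
    intro m hm1 hmn
    have := hlow m hm1 hmn
    have := hup ((n : ℤ) - m).toNat m (by omega) hm1
    omega
  apply Equiv.ext
  intro x
  simp only [Equiv.Perm.one_apply]
  rcases lt_trichotomy x 0 with hx | hx | hx
  · rcases le_or_gt x (-(n:ℤ)) with hxn | hxn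
    · rcases eq_or_lt_of_le hxn with rfl | hxn'
      · have := hid (n:ℤ) (by omega) le_rfl
        have := hsym (n:ℤ)
        omega
      · exact hfix x (by rw [abs_of_neg hx]; omega)
    · have := hid (-x) (by omega) (by omega)
      have := hsym (-x)
      simp at this
      omega
  · subst hx; exact w_zero w hsym
  · rcases le_or_gt x (n:ℤ) with hxn | hxn
    · exact hid x (by omega) hxn
    · exact hfix x (by rw [abs_of_pos hx]; omega)

lemma exists_descent (n : ℕ) (w : Equiv.Perm ℤ)
    (hsym : ∀ i : ℤ, w (-i) = -(w i))
    (hfix : ∀ i : ℤ, (n : ℤ) < |i| → w i = i)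
    (hne : w ≠ 1) :
    ∃ i : Fin n, LB n (w * tgen n i) + 1 = LB n w := by
  by_cases hd : ∃ m : ℤ, 1 ≤ m ∧ m < (n : ℤ) ∧ w (m + 1) < w m
  · obtain ⟨m, hm1, hmn, hdesc⟩ := hd
    have hmnat : (m.toNat : ℤ) = m := Int.toNat_of_nonneg (by omega)
    have hmlt : m.toNat < n := by omega
    set ii : Fin n := ⟨m.toNat, hmlt⟩ with hii
    have hco : (ii : ℤ) = m := hmnat
    refine ⟨ii, LB_mul_desc_tm n w ii (by show (1:ℕ) ≤ m.toNat; omega) ?_⟩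
    rw [hco]
    exact hdesc
  · push_neg at hd
    by_cases hneg : w 1 < 0
    · have hn0 : 0 < n := by
        by_contra hh
        have : w 1 = 1 := hfix 1 (by simp; omega)
        omega
      exact ⟨⟨0, hn0⟩, LB_mul_desc_t0 n w hsym ⟨0, hn0⟩ rfl hneg⟩
    · exfalso
      apply hne
      have hpos : 0 < w 1 := by
        have := w_one_ne w hsym
        omega
      apply eq_one_of_inc n w hsym hfix hpos
      intro m hm1 hmn
      have hle := hd m hm1 hmn
      have hne' : w m ≠ w (m + 1) := fun hh => by have := w.injective hh; omega
      omega

lemma mul_tgen_sym (n : ℕ) (w : Equiv.Perm ℤ) (hsym : ∀ i : ℤ, w (-i) = -(w i)) (i : Fin n) :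
    ∀ x : ℤ, (w * tgen n i) (-x) = -((w * tgen n i) x) := by
  intro x
  show w (tgen n i (-x)) = -(w (tgen n i x))
  rw [tgen_neg, hsym]

lemma mul_tgen_fix (n : ℕ) (w : Equiv.Perm ℤ) (hfix : ∀ i : ℤ, (n : ℤ) < |i| → w i = i)
    (i : Fin n) : ∀ x : ℤ, (n : ℤ) < |x| → (w * tgen n i) x = x := by
  intro x hx
  show w (tgen n i x) = x
  rw [tgen_fix n i x hx]
  exact hfix x hx

lemma exists_word (n : ℕ) : ∀ N : ℕ, ∀ w : Equiv.Perm ℤ,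
    (∀ i : ℤ, w (-i) = -(w i)) → (∀ i : ℤ, (n : ℤ) < |i| → w i = i) → LB n w = N →
    ∃ l : List (Fin n), (l.map (tgen n)).prod = w ∧ l.length = N := by
  intro N
  induction N using Nat.strong_induction_on with
  | _ N ih =>
    intro w hsym hfix hN
    by_cases hw : w = 1
    · subst hw
      rw [LB_one] at hN
      exact ⟨[], by simp, by simp [← hN]⟩
    · obtain ⟨i, hi⟩ := exists_descent n w hsym hfix hw
      have hlt : LB n (w * tgen n i) < N := by omega
      obtain ⟨l, hl, hlen⟩ := ih _ hlt (w * tgen n i)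
        (mul_tgen_sym n w hsym i) (mul_tgen_fix n w hfix i) rfl
      refine ⟨l ++ [i], ?_, ?_⟩
      · rw [List.map_append, List.prod_append, hl]
        simp [mul_assoc, tgen_invol]
      · simp [hlen]; omega

lemma word_props (n : ℕ) (l : List (Fin n)) :
    (∀ i : ℤ, ((l.map (tgen n)).prod) (-i) = -(((l.map (tgen n)).prod) i)) ∧
    (∀ i : ℤ, (n : ℤ) < |i| → ((l.map (tgen n)).prod) i = i) ∧
    LB n ((l.map (tgen n)).prod) ≤ l.length := by
  induction l using List.reverseRecOn with
  | nil => refine ⟨by simp, by simp, by simp [LB_one]⟩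
  | append_singleton l i ih =>
    obtain ⟨h1, h2, h3⟩ := ih
    rw [List.map_append, List.prod_append]
    simp only [List.map_cons, List.map_nil, List.prod_cons, List.prod_nil, mul_one]
    refine ⟨mul_tgen_sym n _ h1 i, mul_tgen_fix n _ h2 i, ?_⟩
    have := LB_mul_le n _ h1 i
    simp only [List.length_append, List.length_cons, List.length_nil]
    omega

lemma clen_eq_LB (n : ℕ) (w : Equiv.Perm ℤ)
    (hsym : ∀ i : ℤ, w (-i) = -(w i)) (hfix : ∀ i : ℤ, (n : ℤ) < |i| → w i = i) :
    clen n w = LB n w := by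
  obtain ⟨l, hl, hlen⟩ := exists_word n (LB n w) w hsym hfix rfl
  have hne : {k | ∃ l : List (Fin n), (l.map (tgen n)).prod = w ∧ l.length = k}.Nonempty :=
    ⟨LB n w, l, hl, hlen⟩
  have hub : clen n w ≤ LB n w := Nat.sInf_le ⟨l, hl, hlen⟩
  have hmem := Nat.sInf_mem hne
  obtain ⟨l', hl', hlen'⟩ := hmem
  have := (word_props n l').2.2
  rw [hl', hlen'] at this
  exact le_antisymm hub this

lemma LB_split (n : ℕ) (j : ℤ) (hj1 : 2 ≤ j) (hj2 : j ≤ (n : ℤ)) (u : Equiv.Perm ℤ) :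
    LB n u = (fB u (1,1) + fB u (1,j) + fB u (j,1) + fB u (j,j))
      + (∑ k ∈ ((Finset.Icc (1:ℤ) (n:ℤ)).erase 1).erase j,
          (fB u (1,k) + fB u (j,k) + fB u (k,1) + fB u (k,j)))
      + ∑ x ∈ ((Finset.Icc (1:ℤ) (n:ℤ)).erase 1).erase j,
          ∑ y ∈ ((Finset.Icc (1:ℤ) (n:ℤ)).erase 1).erase j, fB u (x,y) := by
  have h1I : (1:ℤ) ∈ Finset.Icc (1:ℤ) (n:ℤ) := by simp [Finset.mem_Icc]; omega
  have hjI : j ∈ (Finset.Icc (1:ℤ) (n:ℤ)).erase 1 := by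
    simp [Finset.mem_erase, Finset.mem_Icc]; omega
  have esplit : ∀ g : ℤ → ℕ, ∑ x ∈ Finset.Icc (1:ℤ) (n:ℤ), g x
      = g 1 + (g j + ∑ x ∈ ((Finset.Icc (1:ℤ) (n:ℤ)).erase 1).erase j, g x) := by
    intro g
    rw [← Finset.add_sum_erase _ g h1I, ← Finset.add_sum_erase _ g hjI]
  rw [LB, Finset.sum_product]
  rw [esplit]
  simp only [esplit]
  simp only [Finset.sum_add_distrib]
  ring

lemma main_iff (n : ℕ) (w : Equiv.Perm ℤ)
    (hsym : ∀ i : ℤ, w (-i) = -(w i))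
    (hw1 : 0 < w 1)
    (j : ℤ) (hj1 : 2 ≤ j) (hj2 : j ≤ (n : ℤ)) :
    LB n (w * (Equiv.swap 1 (-j) * Equiv.swap (-1) j)) + 1 = LB n w ↔
      w 1 < -(w j) ∧ ∀ k : ℤ, 2 ≤ k → k < j → ¬ (w j < w k ∧ w k < -(w 1)) := by
  set v := w * (Equiv.swap 1 (-j) * Equiv.swap (-1) j) with hvdef
  set T := ((Finset.Icc (1:ℤ) (n:ℤ)).erase 1).erase j with hT
  have h1j : (1:ℤ) < j := by omega
  have hv1 : v 1 = -(w j) := by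
    show w ((Equiv.swap 1 (-j) * Equiv.swap (-1) j) 1) = -(w j)
    rw [Equiv.Perm.mul_apply,
      Equiv.swap_apply_of_ne_of_ne (show (1:ℤ) ≠ -1 by omega) (show (1:ℤ) ≠ j by omega),
      Equiv.swap_apply_left, ← hsym j]
  have hvj : v j = -(w 1) := by
    show w ((Equiv.swap 1 (-j) * Equiv.swap (-1) j) j) = -(w 1)
    rw [Equiv.Perm.mul_apply, Equiv.swap_apply_right,
      Equiv.swap_apply_of_ne_of_ne (show (-1:ℤ) ≠ 1 by omega) (show (-1:ℤ) ≠ -j by omega),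
      ← hsym 1]
  have hvk : ∀ x : ℤ, 2 ≤ x → x ≠ j → v x = w x := by
    intro x hx2 hxj
    show w ((Equiv.swap 1 (-j) * Equiv.swap (-1) j) x) = w x
    rw [Equiv.Perm.mul_apply,
      Equiv.swap_apply_of_ne_of_ne (show x ≠ -1 by omega) hxj,
      Equiv.swap_apply_of_ne_of_ne (show x ≠ 1 by omega) (show x ≠ -j by omega)]
  have hwm1 : w (-1) = -(w 1) := hsym 1
  have hwmj : w (-j) = -(w j) := hsym j
  have hba : w j ≠ -(w 1) := by
    intro hh
    rw [← hwm1] at hh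
    have := w.injective hh
    omega
  have hkfacts : ∀ k ∈ T, 2 ≤ k ∧ k ≤ (n:ℤ) ∧ k ≠ j ∧ w k ≠ w 1 ∧ w k ≠ -(w 1)
      ∧ w k ≠ w j ∧ w k ≠ -(w j) := by
    intro k hk
    rw [hT, Finset.mem_erase, Finset.mem_erase, Finset.mem_Icc] at hk
    obtain ⟨hkj, hk1, hk1', hkn⟩ := hk
    refine ⟨by omega, hkn, hkj, ?_, ?_, ?_, ?_⟩
    · intro hh; have := w.injective hh; omega
    · intro hh; rw [← hwm1] at hh; have := w.injective hh; omega
    · intro hh; have := w.injective hh; omega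
    · intro hh; rw [← hwmj] at hh; have := w.injective hh; omega
  have hTT : ∑ x ∈ T, ∑ y ∈ T, fB v (x,y) = ∑ x ∈ T, ∑ y ∈ T, fB w (x,y) := by
    refine Finset.sum_congr rfl fun x hx => Finset.sum_congr rfl fun y hy => ?_
    obtain ⟨hx2, _, hxj, _⟩ := hkfacts x hx
    obtain ⟨hy2, _, hyj, _⟩ := hkfacts y hy
    simp only [fB, hvk x hx2 hxj, hvk y hy2 hyj]
  rcases lt_or_gt_of_ne hba with hlt | hgt
  · -- descent case : w j < -(w 1)
    have corner : fB w (1,1) + fB w (1,j) + fB w (j,1) + fB w (j,j)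
        = (fB v (1,1) + fB v (1,j) + fB v (j,1) + fB v (j,j)) + 1 := by
      rw [fB_diag w 1, fB_diag v 1, fB_diag w j, fB_diag v j, fB_lt w h1j, fB_lt v h1j,
        fB_gt w h1j, fB_gt v h1j, hv1, hvj]
      split_ifs <;> (try exact ‹False›.elim) <;> omega
    have perk : ∀ k ∈ T, fB w (1,k) + fB w (j,k) + fB w (k,1) + fB w (k,j)
        = (fB v (1,k) + fB v (j,k) + fB v (k,1) + fB v (k,j))
          + (if k < j ∧ w j < w k ∧ w k < -(w 1) then 2 else 0) := by
      intro k hk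
      obtain ⟨hk2, hkn, hkj, hf1, hf2, hf3, hf4⟩ := hkfacts k hk
      have h1k : (1:ℤ) < k := by omega
      have hvkk := hvk k hk2 hkj
      rcases lt_or_gt_of_ne hkj with hkj' | hkj'
      · rw [fB_lt w h1k, fB_lt v h1k, fB_gt w hkj', fB_gt v hkj', fB_gt w h1k, fB_gt v h1k,
          fB_lt w hkj', fB_lt v hkj', hv1, hvj, hvkk]
        simp only [show (w j < w k) ↔ ¬ (w k < w j) from by omega,
          show (w j < -(w k)) ↔ (w k < -(w j)) from by omega,
          show (w k < -(-(w j))) ↔ (w k < w j) from by omega,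
          show (-(w 1) < w k) ↔ ¬ (w k < -(w 1)) from by omega,
          show (-(w 1) < -(w k)) ↔ (w k < w 1) from by omega,
          hkj', true_and]
        split_ifs <;> (try exact ‹False›.elim) <;> omega
      · rw [fB_lt w h1k, fB_lt v h1k, fB_lt w hkj', fB_lt v hkj', fB_gt w h1k, fB_gt v h1k,
          fB_gt w hkj', fB_gt v hkj', hv1, hvj, hvkk]
        simp only [show (w k < -(-(w j))) ↔ (w k < w j) from by omega,
          show (w k < -(-(w 1))) ↔ (w k < w 1) from by omega,
          show (k < j) ↔ False from iff_false_intro (by omega), false_and, if_false]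
        split_ifs <;> (try exact ‹False›.elim) <;> omega
    have hsum : ∑ k ∈ T, (fB w (1,k) + fB w (j,k) + fB w (k,1) + fB w (k,j))
        = (∑ k ∈ T, (fB v (1,k) + fB v (j,k) + fB v (k,1) + fB v (k,j)))
          + ∑ k ∈ T, (if k < j ∧ w j < w k ∧ w k < -(w 1) then 2 else 0) := by
      rw [← Finset.sum_add_distrib]
      exact Finset.sum_congr rfl perk
    have key : LB n w = LB n v + 1
        + ∑ k ∈ T, (if k < j ∧ w j < w k ∧ w k < -(w 1) then 2 else 0) := by
      rw [LB_split n j hj1 hj2 w, LB_split n j hj1 hj2 v, ← hT, hTT, corner, hsum]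
      ring
    constructor
    · intro hL
      have hE : ∑ k ∈ T, (if k < j ∧ w j < w k ∧ w k < -(w 1) then 2 else 0) = 0 := by omega
      refine ⟨by omega, ?_⟩
      intro k hk2 hkj hcontra
      have hkT : k ∈ T := by
        rw [hT, Finset.mem_erase, Finset.mem_erase, Finset.mem_Icc]
        refine ⟨by omega, by omega, by omega, by omega⟩
      have := Finset.sum_eq_zero_iff.mp hE k hkT
      rw [if_pos ⟨hkj, hcontra.1, hcontra.2⟩] at this
      omega
    · rintro ⟨_, hno⟩
      have hE : ∑ k ∈ T, (if k < j ∧ w j < w k ∧ w k < -(w 1) then 2 else 0) = 0 := by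
        apply Finset.sum_eq_zero
        intro k hk
        obtain ⟨hk2, _, _, _⟩ := hkfacts k hk
        rw [if_neg]
        rintro ⟨hkj', hc1, hc2⟩
        exact hno k hk2 hkj' ⟨hc1, hc2⟩
      omega
  · -- ascent case : -(w 1) < w j
    have corner' : fB w (1,1) + fB w (1,j) + fB w (j,1) + fB w (j,j) + 1
        ≤ fB v (1,1) + fB v (1,j) + fB v (j,1) + fB v (j,j) := by
      rw [fB_diag w 1, fB_diag v 1, fB_diag w j, fB_diag v j, fB_lt w h1j, fB_lt v h1j,
        fB_gt w h1j, fB_gt v h1j, hv1, hvj]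
      split_ifs <;> (try exact ‹False›.elim) <;> omega
    have perk' : ∀ k ∈ T, fB w (1,k) + fB w (j,k) + fB w (k,1) + fB w (k,j)
        ≤ fB v (1,k) + fB v (j,k) + fB v (k,1) + fB v (k,j) := by
      intro k hk
      obtain ⟨hk2, hkn, hkj, hf1, hf2, hf3, hf4⟩ := hkfacts k hk
      have h1k : (1:ℤ) < k := by omega
      have hvkk := hvk k hk2 hkj
      rcases lt_or_gt_of_ne hkj with hkj' | hkj'
      · rw [fB_lt w h1k, fB_lt v h1k, fB_gt w hkj', fB_gt v hkj', fB_gt w h1k, fB_gt v h1k,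
          fB_lt w hkj', fB_lt v hkj', hv1, hvj, hvkk]
        simp only [show (w j < w k) ↔ ¬ (w k < w j) from by omega,
          show (w j < -(w k)) ↔ (w k < -(w j)) from by omega,
          show (w k < -(-(w j))) ↔ (w k < w j) from by omega,
          show (-(w 1) < w k) ↔ ¬ (w k < -(w 1)) from by omega,
          show (-(w 1) < -(w k)) ↔ (w k < w 1) from by omega]
        split_ifs <;> (try exact ‹False›.elim) <;> omega
      · rw [fB_lt w h1k, fB_lt v h1k, fB_lt w hkj', fB_lt v hkj', fB_gt w h1k, fB_gt v h1k,
          fB_gt w hkj', fB_gt v hkj', hv1, hvj, hvkk]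
        simp only [show (w k < -(-(w j))) ↔ (w k < w j) from by omega,
          show (w k < -(-(w 1))) ↔ (w k < w 1) from by omega]
        split_ifs <;> (try exact ‹False›.elim) <;> omega
    have hle : LB n w + 1 ≤ LB n v := by
      rw [LB_split n j hj1 hj2 w, LB_split n j hj1 hj2 v, ← hT, hTT]
      have := Finset.sum_le_sum perk'
      omega
    constructor
    · intro h
      omega
    · rintro ⟨h1c, _⟩
      omega

end DescentAux

open DescentAux in
/-- Descent criterion for the reflections `s_{1j} = (1,-j)(-1,j)` in `C_n`: for
`w ∈ C_n` with `w_1 > 0` and `2 ≤ j ≤ n`, one has `ℓ(w s_{1j}) = ℓ(w) - 1` if and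
only if `w_1 < -w_j` and no `e ∈ {w_2, ..., w_{j-1}}` satisfies `w_j < e < -w_1`. -/
theorem descent_s1j_iff (n : ℕ) (w : Equiv.Perm ℤ)
    (hsym : ∀ i : ℤ, w (-i) = -(w i))
    (hfix : ∀ i : ℤ, (n : ℤ) < |i| → w i = i)
    (hw1 : 0 < w 1)
    (j : ℤ) (hj1 : 2 ≤ j) (hj2 : j ≤ (n : ℤ)) :
    clen n (w * (Equiv.swap 1 (-j) * Equiv.swap (-1) j)) + 1 = clen n w ↔
      w 1 < -(w j) ∧ ∀ k : ℤ, 2 ≤ k → k < j → ¬ (w j < w k ∧ w k < -(w 1)) := by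
  have sapp : ∀ x : ℤ, (Equiv.swap 1 (-j) * Equiv.swap (-1) j) x
      = if x = 1 then -j else if x = j then -1 else if x = -1 then j
        else if x = -j then 1 else x := by
    intro x
    simp only [Equiv.Perm.mul_apply, Equiv.swap_apply_def]
    split_ifs <;> (try exact ‹False›.elim) <;> omega
  have hvsym : ∀ i : ℤ, (w * (Equiv.swap 1 (-j) * Equiv.swap (-1) j)) (-i)
      = -((w * (Equiv.swap 1 (-j) * Equiv.swap (-1) j)) i) := by
    intro x
    show w _ = -(w _)
    rw [← hsym]
    congr 1
    rw [sapp, sapp]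
    split_ifs <;> (try exact ‹False›.elim) <;> omega
  have hvfix : ∀ i : ℤ, (n : ℤ) < |i| → (w * (Equiv.swap 1 (-j) * Equiv.swap (-1) j)) i = i := by
    intro x hx
    have hx' : (n : ℤ) < x ∨ (n : ℤ) < -x := lt_abs.mp hx
    show w _ = x
    have : (Equiv.swap 1 (-j) * Equiv.swap (-1) j) x = x := by
      rw [sapp]
      split_ifs <;> (try exact ‹False›.elim) <;> omega
    rw [this]
    exact hfix x hx
  rw [clen_eq_LB n w hsym hfix, clen_eq_LB n _ hvsym hvfix]
  exact main_iff n w hsym hw1 j hj1 hj2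
end
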